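/- arXiv:2112.04965 — 12 statements merged into one kernel-verified Lean document; each statement's English description precedes it below -/
import Mathlib

section
/- For all integers n ≥ 1 and m ≥ 1, the player can win the (n, m) rotation game if and only if n = 1, or m = 1, or there exist a prime p and positive integers a, b with n = p^a and m = p^b. -/
/-- The state of the (n, m) rotation game after `k` turns: `s₀` is the initial
configuration, `y k` is the move added on turn `k+1`, and `r k` is the rotation
applied after that move. -/
def rotState {n m : ℕ} (y : ℕ → Fin n → ZMod m) (r : ℕ → Fin n)
    (s₀ : Fin n → ZMod m) : ℕ → Fin n → ZMod m
  | 0 => s₀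
  | k + 1 => fun i => (rotState y r s₀ k + y k) (i + r k)

/-- The first `N` moves of `y` form a winning sequence for the (n, m) rotation game. -/
def RotWinning (n m N : ℕ) (y : ℕ → Fin n → ZMod m) : Prop :=
  ∀ (s₀ : Fin n → ZMod m) (r : ℕ → Fin n), ∃ k ≤ N, rotState y r s₀ k = 0

/-- The player can win the (n, m) rotation game. -/
def RotCanWin (n m : ℕ) : Prop := ∃ N y, RotWinning n m N y

set_option linter.unusedVariables false

section Main
open Fin.NatCast Fin.CommRing
set_option linter.unusedSectionVars false
variable {n m : ℕ} [NeZero n] [NeZero m]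

abbrev Gm (n m : ℕ) := Fin n → ZMod m

/-- rotation of a configuration -/
def rotG (t : Fin n) (x : Fin n → ZMod m) : Fin n → ZMod m := fun i => x (i + t)

lemma rotG_rotG (t u : Fin n) (x : Fin n → ZMod m) :
    rotG t (rotG u x) = rotG (t + u) x := by
  funext i; simp [rotG, add_assoc]

lemma rotG_zero (x : Fin n → ZMod m) : rotG 0 x = x := by
  funext i; simp [rotG]

lemma rotG_add (t : Fin n) (x y : Fin n → ZMod m) :
    rotG t (x + y) = rotG t x + rotG t y := rfl

lemma rotG_neg (t : Fin n) (x : Fin n → ZMod m) : rotG t (-x) = -(rotG t x) := rfl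

lemma rotG_eq_zero_iff (t : Fin n) (x : Fin n → ZMod m) : rotG t x = 0 ↔ x = 0 := by
  constructor
  · intro h; funext i
    have := congrFun h (i - t)
    simpa [rotG, sub_add_cancel] using this
  · rintro rfl; rfl

/-- partial sums of rotations -/
def Rsum (r : ℕ → Fin n) : ℕ → Fin n
  | 0 => 0
  | k + 1 => Rsum r k + r k

/-- the abstract walk -/
def Cwalk (t : ℕ → Fin n) (y : ℕ → Fin n → ZMod m) : ℕ → Fin n → ZMod m
  | 0 => 0
  | k + 1 => Cwalk t y k + rotG (t k) (y k)

lemma rotState_closed (y : ℕ → Fin n → ZMod m) (r : ℕ → Fin n) (s₀ : Fin n → ZMod m) (k : ℕ) :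
    rotState y r s₀ k = rotG (Rsum r k) (s₀ + Cwalk (fun j => -(Rsum r j)) y k) := by
  induction k with
  | zero => simp [rotState, Rsum, Cwalk, rotG_zero]
  | succ k ih =>
    have : rotState y r s₀ (k+1) = rotG (r k) (rotState y r s₀ k + y k) := rfl
    rw [this, ih, Cwalk, Rsum]
    simp only [rotG_add, rotG_rotG]
    have h1 : r k + Rsum r k = Rsum r k + r k := add_comm _ _
    have h2 : Rsum r k + r k + -Rsum r k = r k := by ring
    rw [h1, h2]
    abel

lemma rotState_eq_zero_iff (y : ℕ → Fin n → ZMod m) (r : ℕ → Fin n) (s₀ : Fin n → ZMod m)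
    (k : ℕ) : rotState y r s₀ k = 0 ↔ s₀ = -(Cwalk (fun j => -(Rsum r j)) y k) := by
  rw [rotState_closed, rotG_eq_zero_iff, add_eq_zero_iff_eq_neg]

/-- restricted covering property: every adversarial walk (with first rotation 0)
hits every target within N steps -/
def RCov (N : ℕ) (y : ℕ → Fin n → ZMod m) : Prop :=
  ∀ t : ℕ → Fin n, t 0 = 0 → ∀ g : Fin n → ZMod m, ∃ k ≤ N, Cwalk t y k = g

lemma rcov_to_winning {N : ℕ} {y : ℕ → Fin n → ZMod m} (h : RCov N y) :
    RotWinning n m N y := by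
  intro s₀ r
  obtain ⟨k, hk, hw⟩ := h (fun j => -(Rsum r j)) (by simp [Rsum]) (-s₀)
  exact ⟨k, hk, by rw [rotState_eq_zero_iff, hw, neg_neg]⟩

lemma winning_to_rcov {N : ℕ} {y : ℕ → Fin n → ZMod m} (h : RotWinning n m N y) :
    RCov N y := by
  intro t ht0 g
  set r : ℕ → Fin n := fun j => t j - t (j + 1) with hr
  have hR : ∀ j, Rsum r j = -(t j) := by
    intro j; induction j with
    | zero => simp [Rsum, ht0]
    | succ j ih => rw [Rsum, ih, hr]; ring
  obtain ⟨k, hk, hw⟩ := h (-g) r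
  rw [rotState_eq_zero_iff] at hw
  refine ⟨k, hk, ?_⟩
  have : (fun j => -(Rsum r j)) = t := by funext j; rw [hR j, neg_neg]
  rw [this] at hw
  rw [← neg_eq_iff_eq_neg.mpr hw]
  · simp



def posL (t : ℕ → Fin n) : List (Gm n m) → Gm n m
  | [] => 0
  | a :: l => rotG (t 0) a + posL (fun k => t (k + 1)) l

lemma posL_append (t : ℕ → Fin n) (l₁ l₂ : List (Gm n m)) :
    posL t (l₁ ++ l₂) = posL t l₁ + posL (fun k => t (k + l₁.length)) l₂ := by
  induction l₁ generalizing t with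
  | nil => simp [posL]
  | cons a l ih =>
    have harg : (fun k => t (k + l.length + 1)) = (fun k => t (k + (l.length + 1))) := by
      funext k; exact congrArg t (by omega)
    simp only [List.cons_append, posL, List.append_eq, ih, List.length_cons]
    rw [harg, add_assoc]

lemma posL_mem (T : AddSubgroup (Gm n m)) (rotT : ∀ x ∈ T, ∀ τ, rotG τ x ∈ T)
    (t : ℕ → Fin n) (l : List (Gm n m)) (h : ∀ a ∈ l, a ∈ T) : posL t l ∈ T := by
  induction l generalizing t with
  | nil => exact T.zero_mem
  | cons a l ih =>
    exact T.add_mem (rotT a (h a (by simp)) _) (ih _ fun b hb => h b (by simp [hb]))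

/-- list covering: every adversarial prefix-walk hits every element of S -/
def CovL (S : AddSubgroup (Gm n m)) (l : List (Gm n m)) : Prop :=
  (∀ a ∈ l, a ∈ S) ∧ ∀ t : ℕ → Fin n, ∀ g ∈ S, ∃ l₁ l₂, l = l₁ ++ l₂ ∧ posL t l₁ = g

lemma covL_bot : CovL (⊥ : AddSubgroup (Gm n m)) [] := by
  refine ⟨by simp, fun t g hg => ⟨[], [], by simp, ?_⟩⟩
  simp only [AddSubgroup.mem_bot] at hg
  simp [posL, hg]

/-- interleaving construction -/
def ilv (z : List (Gm n m)) : Gm n m → List (Gm n m) → List (Gm n m)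
  | _, [] => []
  | prev, a :: rest => (a - prev) :: (z ++ ilv z a rest)

lemma ilv_aux (S T : AddSubgroup (Gm n m)) (hTS : T ≤ S)
    (rotT : ∀ x ∈ T, ∀ τ, rotG τ x ∈ T)
    (hquot : ∀ x ∈ S, ∀ τ, rotG τ x - x ∈ T)
    (z : List (Gm n m)) (hz : CovL T z) :
    ∀ (es : List (Gm n m)) (prev : Gm n m), prev ∈ S → (∀ a ∈ es, a ∈ S) →
      ∀ (t : ℕ → Fin n) (c : Gm n m), c - prev ∈ T → ∀ g ∈ es,
        ∃ l₁ l₂, ilv z prev es = l₁ ++ l₂ ∧ c + posL t l₁ = g := by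
  intro es
  induction es with
  | nil => intro prev _ _ t c _ g hg; simp at hg
  | cons a rest ih =>
    intro prev hprev hmem t c hc g hg
    have haS : a ∈ S := hmem a (by simp)
    set c₁ : Gm n m := c + rotG (t 0) (a - prev) with hc₁
    have hc₁T : c₁ - a ∈ T := by
      have h1 : rotG (t 0) (a - prev) - (a - prev) ∈ T := hquot _ (S.sub_mem haS hprev) _
      have h2 : c₁ - a = (c - prev) + (rotG (t 0) (a - prev) - (a - prev)) := by
        rw [hc₁]; abel
      rw [h2]; exact T.add_mem hc h1
    rcases List.mem_cons.mp hg with rfl | hg'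
    · -- target is a : hit during the z-phase
      obtain ⟨z₁, z₂, hsplit, hpos⟩ := hz.2 (fun k => t (k + 1)) (g - c₁)
        (by have : g - c₁ = -(c₁ - g) := by abel
            rw [this]; exact T.neg_mem hc₁T)
      refine ⟨(g - prev) :: z₁, z₂ ++ ilv z g rest, ?_, ?_⟩
      · simp [ilv, hsplit, List.append_assoc]
      · simp only [posL, hpos]
        rw [hc₁] at *
        abel
    · -- target in rest
      set c₂ : Gm n m := c₁ + posL (fun k => t (k + 1)) z with hc₂def
      have hc₂T : c₂ - a ∈ T := by
        have hzT : posL (fun k => t (k + 1)) z ∈ T := posL_mem T rotT _ _ hz.1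
        have h2 : c₂ - a = (c₁ - a) + posL (fun k => t (k + 1)) z := by rw [hc₂def]; abel
        rw [h2]; exact T.add_mem hc₁T hzT
      obtain ⟨l₁', l₂', hsplit, hpos⟩ := ih a haS (fun b hb => hmem b (by simp [hb]))
        (fun k => t (k + z.length + 1)) c₂ hc₂T g hg'
      refine ⟨(a - prev) :: (z ++ l₁'), l₂', ?_, ?_⟩
      · simp [ilv, hsplit, List.append_assoc]
      · simp only [posL, posL_append]
        have harg : (fun k => (fun k' => t (k' + 1)) (k + z.length)) =
            (fun k => t (k + z.length + 1)) := rfl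
        rw [harg, ← hpos, hc₂def, hc₁]
        abel

lemma ilv_memS (S T : AddSubgroup (Gm n m)) (hTS : T ≤ S)
    (z : List (Gm n m)) (hzT : ∀ b ∈ z, b ∈ T) :
    ∀ (es : List (Gm n m)) (prev : Gm n m), prev ∈ S → (∀ a ∈ es, a ∈ S) →
      ∀ x ∈ ilv z prev es, x ∈ S := by
  intro es
  induction es with
  | nil => intro prev _ _ x hx; simp [ilv] at hx
  | cons a rest ih =>
    intro prev hprev hmem x hx
    have haS : a ∈ S := hmem a (by simp)
    simp only [ilv, List.mem_cons, List.mem_append] at hx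
    rcases hx with rfl | hx | hx
    · exact S.sub_mem haS hprev
    · exact hTS (hzT x hx)
    · exact ih a haS (fun b hb => hmem b (by simp [hb])) x hx

lemma covL_step (S T : AddSubgroup (Gm n m)) (hTS : T ≤ S)
    (rotT : ∀ x ∈ T, ∀ τ, rotG τ x ∈ T)
    (hquot : ∀ x ∈ S, ∀ τ, rotG τ x - x ∈ T)
    (hex : ∃ z, CovL T z) : ∃ l, CovL S l := by
  classical
  obtain ⟨z, hz⟩ := hex
  set es : List (Gm n m) := (Finset.univ.filter (fun x => x ∈ S)).toList with hes
  have hmemes : ∀ g ∈ S, g ∈ es := by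
    intro g hg; rw [hes]; rw [Finset.mem_toList, Finset.mem_filter]; exact ⟨Finset.mem_univ _, hg⟩
  have hesS : ∀ a ∈ es, a ∈ S := by
    intro a ha; rw [hes, Finset.mem_toList, Finset.mem_filter] at ha; exact ha.2
  refine ⟨ilv z 0 es, ilv_memS S T hTS z hz.1 es 0 S.zero_mem hesS, ?_⟩
  intro t g hg
  obtain ⟨l₁, l₂, hsplit, hpos⟩ := ilv_aux S T hTS rotT hquot z hz es 0 S.zero_mem hesS t 0
    (by simpa using T.zero_mem) g (hmemes g hg)
  exact ⟨l₁, l₂, hsplit, by simpa using hpos⟩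



abbrev Amn (n m : ℕ) := AddMonoidAlgebra (ZMod m) (Fin n)

noncomputable def eFun : Amn n m ≃+ Gm n m :=
  AddMonoidAlgebra.coeffAddEquiv.trans Finsupp.addEquivFunOnFinite

noncomputable def gX : Amn n m := AddMonoidAlgebra.single (-1 : Fin n) 1

lemma eFun_apply (f : Amn n m) (i : Fin n) : eFun f i = f.coeff i := rfl

lemma rot_eFun (τ : Fin n) (f : Amn n m) :
    rotG τ (eFun f) = eFun ((AddMonoidAlgebra.single (-τ) (1 : ZMod m)) * f) := by
  funext i
  rw [eFun_apply, AddMonoidAlgebra.coeff_single_mul_apply, neg_neg, one_mul]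
  exact congrArg f.coeff (add_comm i τ)

lemma single_neg_eq_gX_pow (τ : Fin n) :
    (AddMonoidAlgebra.single (-τ) (1 : ZMod m)) = gX ^ (τ.val : ℕ) := by
  rw [gX, AddMonoidAlgebra.single_pow, one_pow]
  congr 1
  rw [nsmul_eq_mul, mul_neg_one, Fin.cast_val_eq_self]

noncomputable def GK (p : ℕ) (k : ℕ) : AddSubgroup (Gm n m) :=
  ((((Ideal.span {((p : ℕ) : Amn n m)} ⊔ Ideal.span {gX - 1}) ^ k).toAddSubgroup).map
    (eFun : Amn n m ≃+ Gm n m).toAddMonoidHom)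

lemma mem_GK {p k : ℕ} {x : Gm n m} :
    x ∈ GK p k ↔ eFun.symm x ∈ ((Ideal.span {((p : ℕ) : Amn n m)} ⊔ Ideal.span {gX - 1}) ^ k) := by
  rw [GK, AddSubgroup.mem_map_equiv]
  rfl

lemma GK_antitone {p k : ℕ} : GK (n := n) (m := m) p (k + 1) ≤ GK p k := by
  intro x hx
  rw [mem_GK] at *
  exact Ideal.pow_le_pow_right (Nat.le_succ k) hx

lemma GK_rot {p k : ℕ} {x : Gm n m} (hx : x ∈ GK p k) (τ : Fin n) : rotG τ x ∈ GK p k := by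
  rw [mem_GK] at *
  have h1 : rotG τ x = rotG τ (eFun (eFun.symm x)) := by rw [AddEquiv.apply_symm_apply]
  rw [h1, rot_eFun, AddEquiv.symm_apply_apply]
  exact Ideal.mul_mem_left _ _ hx

lemma GK_quot {p k : ℕ} {x : Gm n m} (hx : x ∈ GK p k) (τ : Fin n) :
    rotG τ x - x ∈ GK p (k + 1) := by
  rw [mem_GK] at *
  have h1 : rotG τ x - x =
      eFun (((AddMonoidAlgebra.single (-τ) (1 : ZMod m)) - 1) * eFun.symm x) := by
    rw [sub_mul, one_mul, map_sub, ← rot_eFun, AddEquiv.apply_symm_apply]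
  rw [h1, AddEquiv.symm_apply_apply, pow_succ']
  refine Ideal.mul_mem_mul ?_ hx
  apply Ideal.mem_sup_right
  rw [single_neg_eq_gX_pow, Ideal.mem_span_singleton]
  have hd := sub_dvd_pow_sub_pow (gX (n := n) (m := m)) 1 τ.val
  rwa [one_pow] at hd

lemma GK_zero {p : ℕ} : GK (n := n) (m := m) p 0 = ⊤ := by
  refine top_unique fun x _ => ?_
  rw [mem_GK, pow_zero, Ideal.one_eq_top]
  exact Submodule.mem_top

lemma GK_bot {p a b : ℕ} (hp : p.Prime) (ha : 0 < a) (hb : 0 < b)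
    (hn : n = p ^ a) (hm : m = p ^ b) : GK (n := n) (m := m) p (b + n * b) = ⊥ := by
  have hpb : ((p : ℕ) : Amn n m) ^ b = 0 := by
    have : ((p : ℕ) : Amn n m) ^ b = ((p ^ b : ℕ) : Amn n m) := by push_cast; ring
    rw [this, ← hm]
    have : ((m : ℕ) : Amn n m) = algebraMap (ZMod m) (Amn n m) ((m : ℕ) : ZMod m) := by
      rw [map_natCast]
    rw [this, ZMod.natCast_self, map_zero]
  have hkey : ∃ s : Amn n m, (gX - 1) ^ n = ((p : ℕ) : Amn n m) * s := by
    obtain ⟨r, hr⟩ := exists_add_pow_prime_pow_eq hp (gX (n := n) (m := m)) (-1 : Amn n m) a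
    have hgXn : (gX (n := n) (m := m)) ^ (p ^ a) = 1 := by
      rw [← hn, gX, AddMonoidAlgebra.single_pow, one_pow, nsmul_eq_mul, mul_neg_one,
        Fin.natCast_self, neg_zero, AddMonoidAlgebra.one_def]
    have hsub : (gX - 1 : Amn n m) = gX + (-1) := by ring
    rw [← hn] at hr hgXn
    rcases hp.eq_two_or_odd' with h2 | hodd
    · refine ⟨1 - gX * r, ?_⟩
      have he : Even (p ^ a) := by
        subst h2; exact (Nat.even_pow (n := a)).mpr ⟨even_two, ha.ne'⟩
      have hen : Even n := by rw [hn]; exact he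
      rw [hsub, hr, hgXn, hen.neg_one_pow, h2]
      push_cast; ring
    · refine ⟨-(gX * r), ?_⟩
      have ho : Odd (p ^ a) := hodd.pow
      have hon : Odd n := by rw [hn]; exact ho
      rw [hsub, hr, hgXn, hon.neg_one_pow]
      ring
  refine le_bot_iff.mp fun x hx => ?_
  rw [mem_GK] at hx
  have hle := Ideal.sup_pow_add_le_pow_sup_pow
    (I := Ideal.span {((p : ℕ) : Amn n m)}) (J := Ideal.span {gX - 1}) (n := b) (m := n * b)
  have hPb : (Ideal.span {((p : ℕ) : Amn n m)}) ^ b = ⊥ := by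
    rw [Ideal.span_singleton_pow, hpb]
    exact Ideal.span_singleton_eq_bot.mpr rfl
  have hQnb : (Ideal.span {gX - (1 : Amn n m)}) ^ (n * b) = ⊥ := by
    obtain ⟨s, hs⟩ := hkey
    rw [Ideal.span_singleton_pow, pow_mul, hs, mul_pow, hpb, zero_mul]
    exact Ideal.span_singleton_eq_bot.mpr rfl
  have := hle hx
  rw [hPb, hQnb, sup_idem] at this
  have h0 : eFun.symm x = 0 := (Submodule.mem_bot _).mp this
  rw [AddSubgroup.mem_bot, ← AddEquiv.apply_symm_apply (eFun : Amn n m ≃+ Gm n m) x, h0, map_zero]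



lemma exists_covL_GK (p L : ℕ) (hbot : GK (n := n) (m := m) p L = ⊥) :
    ∀ d, ∃ l, CovL (GK (n := n) (m := m) p (L - d)) l := by
  intro d
  induction d with
  | zero => refine ⟨[], ?_⟩; rw [Nat.sub_zero, hbot]; exact covL_bot
  | succ d ih =>
    by_cases hd : d < L
    · have hstep : L - d = (L - (d + 1)) + 1 := by omega
      rw [hstep] at ih
      exact covL_step _ _ GK_antitone (fun x hx τ => GK_rot hx τ)
        (fun x hx τ => GK_quot hx τ) ih
    · have h2 : L - (d + 1) = L - d := by omega
      rw [h2]; exact ih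

lemma exists_covL_top {p a b : ℕ} (hp : p.Prime) (ha : 0 < a) (hb : 0 < b)
    (hn : n = p ^ a) (hm : m = p ^ b) :
    ∃ l, CovL (⊤ : AddSubgroup (Gm n m)) l := by
  obtain ⟨l, hl⟩ := exists_covL_GK p (b + n * b) (GK_bot hp ha hb hn hm) (b + n * b)
  rw [Nat.sub_self, GK_zero] at hl
  exact ⟨l, hl⟩

lemma posL_take (l : List (Gm n m)) (t : ℕ → Fin n) :
    ∀ k, k ≤ l.length → posL t (l.take k) = Cwalk t (fun j => l.getD j 0) k := by
  intro k
  induction k with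
  | zero => intro _; rfl
  | succ k ih =>
    intro hk
    have hklt : k < l.length := hk
    rw [List.take_succ, List.getElem?_eq_getElem hklt]
    rw [posL_append, ih (le_of_lt hklt)]
    have hlen : (l.take k).length = k := by
      rw [List.length_take]; omega
    show Cwalk t (fun j => l.getD j 0) k + (rotG (t (0 + (l.take k).length)) l[k] + 0) = _
    rw [hlen, add_zero, Nat.zero_add, Cwalk, List.getD_eq_getElem l 0 hklt]

lemma covL_top_rcov (l : List (Gm n m)) (h : CovL (⊤ : AddSubgroup (Gm n m)) l) :
    RCov l.length (fun k => l.getD k 0) := by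
  intro t _ g
  obtain ⟨l₁, l₂, hsplit, hpos⟩ := h.2 t g trivial
  refine ⟨l₁.length, by rw [hsplit]; simp, ?_⟩
  rw [← posL_take l t l₁.length (by rw [hsplit]; simp)]
  rw [hsplit, List.take_left]
  exact hpos

lemma canWin_of_primePow {p a b : ℕ} (hp : p.Prime) (ha : 0 < a) (hb : 0 < b)
    (hn : n = p ^ a) (hm : m = p ^ b) : RotCanWin n m := by
  obtain ⟨l, hl⟩ := exists_covL_top (n := n) (m := m) hp ha hb hn hm
  exact ⟨l.length, _, rcov_to_winning (covL_top_rcov l hl)⟩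

section Fold
variable {q p : ℕ} [NeZero q] [NeZero p]

/-- the projection map from the (n,m) game to the (q,p) game -/
def foldM (q : ℕ) [NeZero q] {p : ℕ} (hpm : p ∣ m) (x : Gm n m) : Gm q p := fun j =>
  ∑ i ∈ Finset.univ.filter (fun i : Fin n => i.val % q = j.val),
    ZMod.castHom hpm (ZMod p) (x i)

lemma foldM_add (hpm : p ∣ m) (x y : Gm n m) : foldM q hpm (x + y) = foldM q hpm x + foldM q hpm y := by
  funext j
  simp only [foldM, Pi.add_apply, map_add, Finset.sum_add_distrib]

lemma foldM_zero (hpm : p ∣ m) : foldM q hpm (0 : Gm n m) = 0 := by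
  funext j; simp [foldM]

def gq (t : Fin n) : Fin q := ⟨t.val % q, Nat.mod_lt _ (Nat.pos_of_ne_zero (NeZero.ne q))⟩

lemma foldM_rot (hqn : q ∣ n) (hpm : p ∣ m) (t : Fin n) (x : Gm n m) :
    foldM q hpm (rotG t x) = rotG (gq t) (foldM q hpm x) := by
  funext j
  show _ = foldM q hpm x (j + gq t)
  rw [foldM, foldM]
  refine Finset.sum_equiv (Equiv.addRight t) ?_ ?_
  · intro i
    simp only [Finset.mem_filter, Finset.mem_univ, true_and, Equiv.coe_addRight]
    have h1 : (i + t).val % q = (i.val % q + t.val % q) % q := by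
      rw [Fin.add_def]
      rw [Nat.mod_mod_of_dvd _ hqn, Nat.add_mod]
    have h2 : (j + gq t).val = (j.val % q + t.val % q) % q := by
      rw [Fin.add_def]
      show (j.val + t.val % q) % q = _
      rw [Nat.add_mod, Nat.mod_mod_of_dvd _ (dvd_refl q)]
    rw [h1, h2]
    constructor
    · intro h
      rw [h, Nat.mod_eq_of_lt j.isLt]
    · intro h
      have hc : i.val % q ≡ j.val % q [MOD q] := by
        have := (Nat.ModEq.add_right_cancel' (t.val % q) (h : _ ≡ _ [MOD q]))
        exact this
      have hA : i.val % q < q := Nat.mod_lt _ (Nat.pos_of_ne_zero (NeZero.ne q))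
      have hB : j.val % q < q := Nat.mod_lt _ (Nat.pos_of_ne_zero (NeZero.ne q))
      have := hc
      unfold Nat.ModEq at this
      rw [Nat.mod_eq_of_lt hA, Nat.mod_eq_of_lt hB] at this
      rw [this, Nat.mod_eq_of_lt j.isLt]
  · intro i _
    simp [rotG]

lemma foldM_surj (hqn : q ∣ n) (hpm : p ∣ m) (u : Gm q p) : ∃ x : Gm n m, foldM q hpm x = u := by
  have hqle : q ≤ n := Nat.le_of_dvd (Nat.pos_of_ne_zero (NeZero.ne n)) hqn
  refine ⟨fun i => if h : i.val < q then (((u ⟨i.val, h⟩).val : ℕ) : ZMod m) else 0, ?_⟩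
  funext j
  rw [foldM]
  have hj : (⟨j.val, lt_of_lt_of_le j.isLt hqle⟩ : Fin n) ∈
      Finset.univ.filter (fun i : Fin n => i.val % q = j.val) := by
    simp [Nat.mod_eq_of_lt j.isLt]
  rw [Finset.sum_eq_single (⟨j.val, lt_of_lt_of_le j.isLt hqle⟩ : Fin n)]
  · rw [dif_pos j.isLt]
    have : (⟨j.val, j.isLt⟩ : Fin q) = j := rfl
    rw [this, map_natCast, ZMod.natCast_val, ZMod.cast_id]
  · intro i hmem hne
    by_cases hi : i.val < q
    · exfalso
      apply hne
      apply Fin.ext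
      simp only [Finset.mem_filter, Finset.mem_univ, true_and] at hmem
      show i.val = j.val
      rwa [Nat.mod_eq_of_lt hi] at hmem
    · rw [dif_neg hi, map_zero]
  · intro habs
    exact absurd hj habs

lemma foldM_cwalk (hqn : q ∣ n) (hpm : p ∣ m) (t : ℕ → Fin n) (y : ℕ → Gm n m) (k : ℕ) :
    foldM q hpm (Cwalk t y k) = Cwalk (fun j => gq (t j)) (fun j => foldM q hpm (y j)) k := by
  induction k with
  | zero => exact foldM_zero hpm
  | succ k ih => rw [Cwalk, foldM_add hpm, ih, foldM_rot hqn hpm, Cwalk]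

lemma rcov_fold (hqn : q ∣ n) (hpm : p ∣ m) {N : ℕ} {y : ℕ → Gm n m} (h : RCov N y) :
    RCov (n := q) (m := p) N (fun j => foldM q hpm (y j)) := by
  intro t' ht0 u
  set t : ℕ → Fin n := fun j => ⟨(t' j).val,
    lt_of_lt_of_le (t' j).isLt (Nat.le_of_dvd (Nat.pos_of_ne_zero (NeZero.ne n)) hqn)⟩ with ht
  have hgq : ∀ j, gq (t j) = t' j := by
    intro j
    apply Fin.ext
    show (t' j).val % q = (t' j).val
    exact Nat.mod_eq_of_lt (t' j).isLt
  obtain ⟨x, hx⟩ := foldM_surj hqn hpm u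
  obtain ⟨k, hk, hw⟩ := h t (by apply Fin.ext; show (t' 0).val = (0 : Fin n).val; rw [ht0]; simp) x
  refine ⟨k, hk, ?_⟩
  have := foldM_cwalk hqn hpm t y k
  rw [hw, hx] at this
  have hfun : (fun j => gq (t j)) = t' := funext hgq
  rw [hfun] at this
  exact this.symm

end Fold

section Adv
variable {q p : ℕ} [NeZero q] [NeZero p]

def DD (x : Gm q p) : Gm q p := rotG 1 x - x

lemma rotG_sub (t : Fin q) (x y : Gm q p) : rotG t (x - y) = rotG t x - rotG t y := rfl
lemma rotG_add' (t : Fin q) (x y : Gm q p) : rotG t (x + y) = rotG t x + rotG t y := rfl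

lemma rot_fixed_const {z : Gm q p} (h : rotG 1 z = z) (i : Fin q) : z i = z 0 := by
  have hv : ∀ v : ℕ, rotG ((v : ℕ) : Fin q) z = z := by
    intro v
    induction v with
    | zero => simpa using rotG_zero z
    | succ v ih =>
      have hc : ((v + 1 : ℕ) : Fin q) = 1 + (v : Fin q) := by push_cast; ring
      rw [hc, ← rotG_rotG, ih, h]
  calc z i = rotG ((i.val : ℕ) : Fin q) z 0 := by
        rw [Fin.cast_val_eq_self]
        show z i = z (0 + i)
        rw [zero_add]
    _ = z 0 := by rw [hv]

lemma DD_rot (τ : Fin q) (x : Gm q p) : DD (rotG τ x) = rotG τ (DD x) := by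
  rw [DD, DD, rotG_sub, rotG_rotG, rotG_rotG, add_comm]

lemma DD_add (x y : Gm q p) : DD (x + y) = DD x + DD y := by
  rw [DD, DD, DD, rotG_add']
  abel

lemma DD_sub (x y : Gm q p) : DD (x - y) = DD x - DD y := by
  rw [DD, DD, DD, rotG_sub]
  abel

lemma DD_zero : DD (0 : Gm q p) = 0 := by rw [DD]; funext i; simp [rotG]

lemma sum_DD (x : Gm q p) : ∑ i, DD x i = 0 := by
  have h1 : ∑ i, DD x i = (∑ i, x (i + 1)) - ∑ i, x i := by
    rw [← Finset.sum_sub_distrib]; rfl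
  have h2 : ∑ i : Fin q, x (i + 1) = ∑ i, x i :=
    Fintype.sum_equiv (Equiv.addRight (1 : Fin q)) _ _ (fun i => rfl)
  rw [h1, h2, sub_self]

lemma exists_step (hq : q.Prime) (hp : p.Prime) (hne : q ≠ p)
    {c u : Gm q p} (y : Gm q p) (hc : DD c ≠ u) :
    ∃ τ : Fin q, DD (c + rotG τ y) ≠ u := by
  by_cases h0 : DD y = 0
  · refine ⟨0, ?_⟩
    rw [rotG_zero, DD_add, h0, add_zero]
    exact hc
  · by_cases h1 : rotG 1 (DD y) = DD y
    · exfalso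
      apply h0
      have hconst := rot_fixed_const h1
      have hsum := sum_DD y
      have hcard : ∑ i : Fin q, DD y i = (q : ℕ) • DD y 0 := by
        rw [Finset.sum_congr rfl (fun i _ => hconst i), Finset.sum_const,
          Finset.card_univ, Fintype.card_fin]
      rw [hcard] at hsum
      have hqz : ((q : ℕ) : ZMod p) ≠ 0 := by
        rw [Ne, ZMod.natCast_eq_zero_iff]
        intro hdvd
        exact hne ((Nat.prime_dvd_prime_iff_eq hp hq).mp hdvd).symm
      haveI : Fact p.Prime := ⟨hp⟩
      have h00 : DD y 0 = 0 := by
        have := hsum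
        rw [nsmul_eq_mul] at this
        rcases mul_eq_zero.mp this with h | h
        · exact absurd h hqz
        · exact h
      funext i
      rw [hconst i, h00]
      rfl
    · by_cases hA : DD (c + rotG 0 y) ≠ u
      · exact ⟨0, hA⟩
      · push_neg at hA
        refine ⟨1, fun hB => h1 ?_⟩
        rw [rotG_zero, DD_add] at hA
        rw [DD_add, DD_rot] at hB
        rw [← hB] at hA
        exact (add_left_cancel hA).symm

noncomputable def pick (u yk c : Gm q p) : Fin q :=
  if h : ∃ τ : Fin q, DD (c + rotG τ yk) ≠ u then h.choose else 0

noncomputable def PW (u : Gm q p) (y : ℕ → Gm q p) : ℕ → Gm q p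
  | 0 => 0
  | k + 1 => PW u y k + rotG (if k = 0 then 0 else pick u (y k) (PW u y k)) (y k)

noncomputable def tAdv (u : Gm q p) (y : ℕ → Gm q p) (k : ℕ) : Fin q :=
  if k = 0 then 0 else pick u (y k) (PW u y k)

lemma cwalk_PW (u : Gm q p) (y : ℕ → Gm q p) (k : ℕ) :
    Cwalk (tAdv u y) y k = PW u y k := by
  induction k with
  | zero => rfl
  | succ k ih => rw [Cwalk, ih]; rfl

lemma PW_ne (hq : q.Prime) (hp : p.Prime) (hne : q ≠ p) {u : Gm q p} {y : ℕ → Gm q p}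
    (hu0 : u ≠ 0) (huy : DD (y 0) ≠ u) : ∀ k, DD (PW u y k) ≠ u := by
  intro k
  induction k with
  | zero =>
    show DD (0 : Gm q p) ≠ u
    rw [DD_zero]
    exact fun h => hu0 h.symm
  | succ k ih =>
    by_cases hk0 : k = 0
    · subst hk0
      show DD (PW u y 0 + rotG (if (0:ℕ) = 0 then 0 else _) (y 0)) ≠ u
      rw [if_pos rfl, rotG_zero]
      show DD ((0 : Gm q p) + y 0) ≠ u
      rw [zero_add]
      exact huy
    · have hex : ∃ τ : Fin q, DD (PW u y k + rotG τ (y k)) ≠ u :=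
        exists_step hq hp hne (y k) ih
      show DD (PW u y k + rotG (if k = 0 then 0 else pick u (y k) (PW u y k)) (y k)) ≠ u
      rw [if_neg hk0, pick, dif_pos hex]
      exact hex.choose_spec

lemma not_rcov (hq : q.Prime) (hp : p.Prime) (hne : q ≠ p) (N : ℕ) (y : ℕ → Gm q p) :
    ¬ RCov (n := q) (m := p) N y := by
  haveI : Fact (1 < p) := ⟨hp.one_lt⟩
  intro hrc
  have hq2 : 2 ≤ q := hq.two_le
  have h01 : (0 : Fin q) ≠ 1 := by
    intro h
    have := congrArg Fin.val h
    rw [Fin.val_zero, Fin.val_one'] at this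
    rw [Nat.mod_eq_of_lt hq2] at this
    exact absurd this (by norm_num)
  set e₀ : Gm q p := fun i => if i = 0 then 1 else 0 with he₀
  set e₁ : Gm q p := fun i => if i = 1 then 1 else 0 with he₁
  have hDD0 : DD e₀ ≠ 0 := by
    intro h
    rw [DD, sub_eq_zero] at h
    have := rot_fixed_const h 1
    rw [he₀] at this
    simp only [if_neg (Ne.symm h01), if_pos rfl] at this
    exact one_ne_zero this.symm
  have hDD1 : DD e₁ ≠ 0 := by
    intro h
    rw [DD, sub_eq_zero] at h
    have := rot_fixed_const h 1
    rw [he₁] at this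
    simp only [if_pos rfl, if_neg h01] at this
    exact one_ne_zero this
  have h10 : (1 : Fin q) ≠ 0 := fun h => h01 h.symm
  have hDD01 : DD e₀ ≠ DD e₁ := by
    intro h
    have hsub : DD (e₀ - e₁) = 0 := by rw [DD_sub, h, sub_self]
    rw [DD, sub_eq_zero] at hsub
    have hcon := rot_fixed_const hsub
    have hval0 : (e₀ - e₁) 0 = 1 := by
      show e₀ 0 - e₁ 0 = 1
      rw [he₀, he₁]
      simp [h01]
    have hval1 : (e₀ - e₁) 1 = -1 := by
      show e₀ 1 - e₁ 1 = -1
      rw [he₀, he₁]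
      simp [h10]
    by_cases hq2' : q = 2
    · have hp2 : p ≠ 2 := fun hp2 => hne (hq2'.trans hp2.symm)
      haveI : Fact (2 < p) := ⟨lt_of_le_of_ne hp.two_le (Ne.symm hp2)⟩
      have hcc := (hcon 1).trans hval0
      rw [hval1] at hcc
      exact ZMod.neg_one_ne_one hcc
    · have hq3 : 3 ≤ q := by omega
      set i₂ : Fin q := ⟨2, by omega⟩ with hi₂
      have hv2 : (e₀ - e₁) i₂ = 0 := by
        show e₀ i₂ - e₁ i₂ = 0
        have h20 : i₂ ≠ 0 := by
          intro h; have := congrArg Fin.val h; rw [hi₂] at this; simp at this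
        have h21 : i₂ ≠ 1 := by
          intro h; have := congrArg Fin.val h
          rw [hi₂, Fin.val_one'] at this
          simp [Nat.mod_eq_of_lt (by omega : 1 < q)] at this
        rw [he₀, he₁]
        simp [h20, h21]
      have hcc := (hcon i₂).trans hval0
      rw [hv2] at hcc
      exact one_ne_zero hcc.symm
  classical
  set u : Gm q p := if DD (y 0) = DD e₀ then DD e₁ else DD e₀ with hu
  set xt : Gm q p := if DD (y 0) = DD e₀ then e₁ else e₀ with hxt
  have hDDxt : DD xt = u := by
    rw [hu, hxt]
    split_ifs <;> rfl
  have hu0 : u ≠ 0 := by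
    rw [hu]; split_ifs
    exacts [hDD1, hDD0]
  have huy : DD (y 0) ≠ u := by
    rw [hu]; split_ifs with h
    · rw [h]; exact hDD01
    · exact h
  obtain ⟨k, hk, hw⟩ := hrc (tAdv u y) (by rw [tAdv]; simp) xt
  have hfin := PW_ne hq hp hne hu0 huy k
  rw [← cwalk_PW u y k, hw, hDDxt] at hfin
  exact hfin rfl
end Adv


lemma canWin_m_one (n : ℕ) : RotCanWin n 1 := by
  refine ⟨0, fun _ _ => 0, fun s₀ r => ⟨0, le_refl 0, ?_⟩⟩
  funext i
  exact Subsingleton.elim _ _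

lemma canWin_n_one (m : ℕ) [NeZero m] : RotCanWin 1 m := by
  refine ⟨m - 1, fun _ _ => 1, rcov_to_winning ?_⟩
  intro t _ g
  have hwalk : ∀ k, Cwalk t (fun _ _ => (1 : ZMod m)) k = fun _ => (k : ZMod m) := by
    intro k
    induction k with
    | zero => funext i; simp [Cwalk]
    | succ k ih =>
      rw [Cwalk, ih]
      funext i
      show (k : ZMod m) + rotG (t k) (fun _ => (1 : ZMod m)) i = ((k + 1 : ℕ) : ZMod m)
      show (k : ZMod m) + 1 = ((k + 1 : ℕ) : ZMod m)
      push_cast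
      ring
  refine ⟨(g 0).val, ?_, ?_⟩
  · have := ZMod.val_lt (g 0)
    omega
  · rw [hwalk]
    funext i
    have hi : i = 0 := Subsingleton.elim i 0
    rw [hi]
    show ((g 0).val : ZMod m) = g 0
    simp [ZMod.natCast_val, ZMod.cast_id]

lemma not_canWin {q p : ℕ} [NeZero q] [NeZero p]
    (hq : q.Prime) (hp : p.Prime) (hne : q ≠ p) (hqn : q ∣ n) (hpm : p ∣ m) :
    ¬ RotCanWin n m := by
  rintro ⟨N, y, hw⟩
  exact not_rcov hq hp hne N _ (rcov_fold hqn hpm (winning_to_rcov hw))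

end Main

theorem rotation_game_characterization (n m : ℕ) (hn : 1 ≤ n) (hm : 1 ≤ m) :
    RotCanWin n m ↔
      n = 1 ∨ m = 1 ∨
        ∃ p a b : ℕ, p.Prime ∧ 0 < a ∧ 0 < b ∧ n = p ^ a ∧ m = p ^ b := by
  haveI : NeZero n := ⟨by omega⟩
  haveI : NeZero m := ⟨by omega⟩
  constructor
  · intro hcw
    by_contra hrhs
    push_neg at hrhs
    obtain ⟨hn1, hm1, hpp⟩ := hrhs
    have hn2 : 2 ≤ n := by omega
    have hm2 : 2 ≤ m := by omega
    obtain ⟨q, p, hq, hp, hqn, hpm, hne⟩ :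
        ∃ q p, q.Prime ∧ p.Prime ∧ q ∣ n ∧ p ∣ m ∧ q ≠ p := by
      set p0 := m.minFac with hp0
      have hp0p : p0.Prime := Nat.minFac_prime (by omega)
      have hp0m : p0 ∣ m := Nat.minFac_dvd m
      by_cases hqq : ∃ qq, qq.Prime ∧ qq ∣ n ∧ qq ≠ p0
      · obtain ⟨qq, h1, h2, h3⟩ := hqq
        exact ⟨qq, p0, h1, hp0p, h2, hp0m, h3⟩
      · push_neg at hqq
        have hq1 : p0 ∣ n := by
          have h := Nat.minFac_prime (show n ≠ 1 by omega)
          have hd := Nat.minFac_dvd n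
          exact hqq n.minFac h hd ▸ hd
        have hnpow : n = p0 ^ n.primeFactorsList.length :=
          Nat.eq_prime_pow_of_unique_prime_dvd (by omega)
            (fun {qq} hqqp hdvd => hqq qq hqqp hdvd)
        have hna : 0 < n.primeFactorsList.length := by
          by_contra hcon
          have h0 : n.primeFactorsList.length = 0 := by omega
          rw [h0, pow_zero] at hnpow
          omega
        by_cases hrr : ∃ rr, rr.Prime ∧ rr ∣ m ∧ rr ≠ p0
        · obtain ⟨rr, h1, h2, h3⟩ := hrr
          exact ⟨p0, rr, hp0p, h1, hq1, h2, fun hh => h3 hh.symm⟩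
        · push_neg at hrr
          have hmpow : m = p0 ^ m.primeFactorsList.length :=
            Nat.eq_prime_pow_of_unique_prime_dvd (by omega)
              (fun {rr} h hd => hrr rr h hd)
          have hmb : 0 < m.primeFactorsList.length := by
            by_contra hcon
            have h0 : m.primeFactorsList.length = 0 := by omega
            rw [h0, pow_zero] at hmpow
            omega
          exfalso
          exact hpp p0 n.primeFactorsList.length m.primeFactorsList.length hp0p
            hna hmb hnpow hmpow
    haveI : NeZero q := ⟨hq.pos.ne'⟩
    haveI : NeZero p := ⟨hp.pos.ne'⟩
    exact not_canWin hq hp hne hqn hpm hcw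
  · rintro (h1 | hm1 | ⟨p, a, b, hp, ha, hb, hnp, hmp⟩)
    · subst h1; exact canWin_n_one m
    · subst hm1; exact canWin_m_one n
    · exact canWin_of_primePow hp ha hb hnp hmp
end

section
/- For distinct primes p and q, the player cannot win the (p, q) rotation game: no winning sequence of moves exists when n = p and m = q. -/
theorem no_win_distinct_primes (p q : ℕ) (hp : p.Prime) (hq : q.Prime) (hpq : p ≠ q) :
    ¬ RotCanWin p q := by
  classical
  haveI : Fact q.Prime := ⟨hq⟩
  haveI : NeZero p := ⟨hp.pos.ne'⟩
  rintro ⟨N, y, hwin⟩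
  set K := AlgebraicClosure (ZMod q) with hK
  -- a nontrivial p-th root of unity in K
  obtain ⟨ζ, hζroot⟩ : ∃ ζ : K, ((∑ i ∈ Finset.range p, Polynomial.X ^ i : Polynomial K)).IsRoot ζ := by
    apply IsAlgClosed.exists_root
    haveI : Fact p.Prime := ⟨hp⟩
    rw [← Polynomial.cyclotomic_prime K p, Polynomial.degree_cyclotomic, Nat.totient_prime hp]
    simpa using Nat.sub_ne_zero_of_lt hp.one_lt
  have hpK : (p : K) ≠ 0 := by
    have h1 : ((p : ZMod q)) ≠ 0 := by
      rw [Ne, ZMod.natCast_eq_zero_iff]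
      exact fun h => hpq ((Nat.prime_dvd_prime_iff_eq hq hp).mp h).symm
    have : (p : K) = algebraMap (ZMod q) K (p : ZMod q) := by push_cast; simp
    rw [this]
    exact fun h => h1 ((algebraMap (ZMod q) K).injective (by simpa using h))
  have hζ1 : ζ ≠ 1 := by
    rintro rfl
    apply hpK
    have := hζroot
    simpa [Polynomial.IsRoot, Polynomial.eval_finset_sum] using this
  have hζp : ζ ^ p = 1 := by
    have := geom_sum_mul ζ p
    rw [Polynomial.IsRoot] at hζroot
    have h0 : (∑ i ∈ Finset.range p, ζ ^ i) = 0 := by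
      simpa [Polynomial.eval_finset_sum] using hζroot
    rw [h0, zero_mul] at this
    linear_combination -this
  have hζ0 : ζ ≠ 0 := by
    intro h
    rw [h, zero_pow hp.pos.ne'] at hζp
    exact zero_ne_one hζp
  -- the character
  have hmod : ∀ n : ℕ, ζ ^ (n % p) = ζ ^ n := by
    intro n
    conv_rhs => rw [← Nat.div_add_mod n p, pow_add, pow_mul, hζp, one_pow, one_mul]
  have hχadd : ∀ i j : Fin p, ζ ^ ((i + j : Fin p) : ℕ) = ζ ^ (i : ℕ) * ζ ^ (j : ℕ) := by
    intro i j
    rw [Fin.val_add, hmod, pow_add]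
  set φ : (Fin p → ZMod q) → K :=
    fun x => ∑ i : Fin p, algebraMap (ZMod q) K (x i) * ζ ^ (i : ℕ) with hφ
  have hφ0 : φ 0 = 0 := by simp [hφ]
  have hφadd : ∀ x x' : Fin p → ZMod q, φ (x + x') = φ x + φ x' := by
    intro x x'
    simp [hφ, map_add, add_mul, Finset.sum_add_distrib]
  have hφrot : ∀ (x : Fin p → ZMod q) (r : Fin p),
      φ (fun i => x (i + r)) * ζ ^ (r : ℕ) = φ x := by
    intro x r
    rw [hφ, Finset.sum_mul]
    apply Fintype.sum_equiv (Equiv.addRight r)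
    intro i
    simp only [Equiv.coe_addRight]
    rw [mul_assoc, ← hχadd]
  set w : ℕ → K := fun k => φ (y k) with hw
  -- adversary values
  set v : ℕ → K := fun k => Nat.rec (if (1 : K) = -w 0 then ζ else 1)
    (fun k vk => if vk + w k = -w (k + 1) then ζ⁻¹ * (vk + w k) else vk + w k) k with hv
  have hv0 : v 0 = if (1 : K) = -w 0 then ζ else 1 := rfl
  have hvs : ∀ k, v (k + 1) =
      if v k + w k = -w (k + 1) then ζ⁻¹ * (v k + w k) else v k + w k := fun k => rfl
  set r : ℕ → Fin p := fun k => if v k + w k = -w (k + 1) then 1 else 0 with hr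
  have hζ1' : ζ⁻¹ ≠ 1 := by
    intro h
    exact hζ1 (by rw [← inv_inv ζ, h, inv_one])
  -- invariant
  have hinv : ∀ k, v k ≠ 0 ∧ v k + w k ≠ 0 := by
    intro k
    induction k with
    | zero =>
      rw [hv0]
      split_ifs with h
      · exact ⟨hζ0, fun h2 => hζ1 (by rw [h]; linear_combination h2)⟩
      · exact ⟨one_ne_zero, fun h2 => h (by linear_combination h2)⟩
    | succ k ih =>
      rw [hvs]
      split_ifs with h
      · constructor
        · exact mul_ne_zero (inv_ne_zero hζ0) ih.2
        · rw [h]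
          intro h2
          have : (ζ⁻¹ - 1) * (v k + w k) = 0 := by
            rw [h]; linear_combination h2
          rcases mul_eq_zero.mp this with h3 | h3
          · exact hζ1' (by linear_combination h3)
          · rw [h] at h3
            exact ih.2 (by rw [h]; exact h3)
      · exact ⟨ih.2, fun h2 => h (by linear_combination h2)⟩
  -- key relation for recursive values
  have hkey : ∀ k, ζ ^ ((r k : Fin p) : ℕ) * v (k + 1) = v k + w k := by
    intro k
    rw [hvs]
    simp only [hr]
    split_ifs with h
    · have h1 : ((1 : Fin p) : ℕ) = 1 := by
        rw [Fin.val_one']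
        exact Nat.mod_eq_of_lt hp.one_lt
      rw [h1, pow_one, ← mul_assoc, mul_inv_cancel₀ hζ0, one_mul]
    · simp
  -- initial configuration
  set j : Fin p := if (1 : K) = -w 0 then 1 else 0 with hj
  set s₀ : Fin p → ZMod q := fun i => if i = j then 1 else 0 with hs₀
  have hφs₀ : φ s₀ = v 0 := by
    have : φ s₀ = ζ ^ (j : ℕ) := by
      simp only [hφ, hs₀]
      rw [Finset.sum_eq_single j]
      · simp
      · intro b _ hb; simp [hb]
      · intro h; exact absurd (Finset.mem_univ j) h
    rw [this, hv0, hj]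
    split_ifs with h
    · rw [Fin.val_one', Nat.mod_eq_of_lt hp.one_lt, pow_one]
    · simp
  -- main induction
  have hmain : ∀ k, φ (rotState y r s₀ k) = v k := by
    intro k
    induction k with
    | zero => exact hφs₀
    | succ k ih =>
      have hst : rotState y r s₀ (k + 1) =
          fun i => (rotState y r s₀ k + y k) (i + r k) := rfl
      have := hφrot (rotState y r s₀ k + y k) (r k)
      rw [hφadd, ih] at this
      rw [hst]
      have hpow : (ζ : K) ^ ((r k : Fin p) : ℕ) ≠ 0 := pow_ne_zero _ hζ0
      apply mul_left_cancel₀ hpow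
      rw [hkey k, ← this]
      ring
  obtain ⟨k, _, hk⟩ := hwin s₀ r
  have := hmain k
  rw [hk, hφ0] at this
  exact (hinv k).1 this.symm
end

section
/- Let a, b, k be positive integers. If the player cannot win the (a, b) rotation game, then the player cannot win the (a·k, b) rotation game. -/
theorem no_win_multiple_positions (a b k : ℕ) (ha : 0 < a) (hb : 0 < b) (hk : 0 < k)
    (h : ¬ RotCanWin a b) : ¬ RotCanWin (a * k) b := by
  intro hwin
  apply h
  obtain ⟨N, y, hy⟩ := hwin
  -- the additive embedding
  have hφlt : ∀ i : Fin a, i.val * k < a * k := fun i =>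
    (Nat.mul_lt_mul_right hk).mpr i.isLt
  set φ : Fin a → Fin (a * k) := fun i => ⟨i.val * k, hφlt i⟩ with hφ
  have hadd : ∀ i j : Fin a, φ (i + j) = φ i + φ j := by
    intro i j
    apply Fin.ext
    show ((i.val + j.val) % a) * k = (i.val * k + j.val * k) % (a * k)
    rw [← Nat.add_mul, Nat.mul_mod_mul_right]
  -- retraction on values
  refine ⟨N, fun n i => y n (φ i), ?_⟩
  intro s₀ r
  set s₀' : Fin (a * k) → ZMod b := fun i => s₀ ⟨i.val / k, by
    exact Nat.div_lt_of_lt_mul (Nat.mul_comm a k ▸ i.isLt)⟩ with hs₀'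
  have hsect : ∀ i : Fin a, s₀' (φ i) = s₀ i := by
    intro i
    simp only [hs₀', hφ]
    congr 1
    apply Fin.ext
    exact Nat.mul_div_cancel _ hk
  set r' : ℕ → Fin (a * k) := fun n => φ (r n) with hr'
  have key : ∀ j (i : Fin a),
      rotState y r' s₀' j (φ i) = rotState (fun n i => y n (φ i)) r s₀ j i := by
    intro j
    induction j with
    | zero => intro i; exact hsect i
    | succ j ih =>
      intro i
      show (rotState y r' s₀' j + y j) (φ i + r' j)
        = (rotState (fun n i => y n (φ i)) r s₀ j + fun i => y j (φ i)) (i + r j)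
      rw [hr', ← hadd]
      simp only [Pi.add_apply]
      rw [ih]
  obtain ⟨j, hjN, hj0⟩ := hy s₀' r'
  refine ⟨j, hjN, ?_⟩
  funext i
  rw [← key j i, hj0]
  rfl
end

section
/- Let a, b, k be positive integers. If the player cannot win the (a, b) rotation game, then the player cannot win the (a, b·k) rotation game. -/
theorem no_win_multiple_modulus (a b k : ℕ) (ha : 0 < a) (hb : 0 < b) (hk : 0 < k)
    (h : ¬ RotCanWin a b) : ¬ RotCanWin a (b * k) := by
  intro ⟨N, y, hw⟩
  haveI : NeZero b := ⟨hb.ne'⟩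
  apply h
  set f : ZMod (b * k) →+* ZMod b := ZMod.castHom (dvd_mul_right b k) (ZMod b) with hf
  refine ⟨N, fun n i => f (y n i), ?_⟩
  intro s₀ r
  set s₀' : Fin a → ZMod (b * k) := fun i => ((s₀ i).val : ZMod (b * k)) with hs
  have hlift : ∀ i, f (s₀' i) = s₀ i := by
    intro i
    simp [hs, hf, ZMod.natCast_rightInverse (s₀ i)]
  have key : ∀ n i, rotState (fun n i => f (y n i)) r s₀ n i =
      f (rotState y r s₀' n i) := by
    intro n
    induction n with
    | zero => intro i; exact (hlift i).symm
    | succ n ih =>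
        intro i
        simp only [rotState, Pi.add_apply, map_add, ih]
  obtain ⟨m, hm, hm0⟩ := hw s₀' r
  refine ⟨m, hm, ?_⟩
  funext i
  simp [key m i, hm0]
end

section
/- For all integers n ≥ 1 and m ≥ 1, if the player can win the (n, m) rotation game, then n = 1, or m = 1, or there exist a prime p and positive integers a, b with n = p^a and m = p^b. -/
/-- Auxiliary invariant functional. -/
noncomputable def rotF {n m : ℕ} {L : Type} [Field L] (φ : ZMod m →+* L) (ζ : L)
    (s : Fin n → ZMod m) : L := ∑ i, φ (s i) * ζ ^ (i : ℕ)

theorem rotF_add {n m : ℕ} {L : Type} [Field L] (φ : ZMod m →+* L) (ζ : L)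
    (a b : Fin n → ZMod m) : rotF φ ζ (a + b) = rotF φ ζ a + rotF φ ζ b := by
  simp [rotF, add_mul, Finset.sum_add_distrib]

theorem rotF_zero {n m : ℕ} {L : Type} [Field L] (φ : ZMod m →+* L) (ζ : L) :
    rotF φ ζ (0 : Fin n → ZMod m) = 0 := by
  simp [rotF]

theorem rotF_single {n m : ℕ} [NeZero n] {L : Type} [Field L] (φ : ZMod m →+* L) (ζ : L)
    (j : Fin n) : rotF φ ζ (Pi.single j 1) = ζ ^ (j : ℕ) := by
  classical
  rw [rotF, Finset.sum_eq_single j]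
  · simp
  · intro b _ hb
    simp [Pi.single_eq_of_ne hb]
  · simp

theorem rotF_rot {n m : ℕ} [NeZero n] {L : Type} [Field L] (φ : ZMod m →+* L) {ζ : L}
    (hζn : ζ ^ n = 1) (t : Fin n → ZMod m) (ρ : Fin n) :
    ζ ^ (ρ : ℕ) * rotF φ ζ (fun i => t (i + ρ)) = rotF φ ζ t := by
  have hpow : ∀ a : ℕ, ζ ^ (a % n) = ζ ^ a := by
    intro a
    conv_rhs => rw [← Nat.div_add_mod a n]
    rw [pow_add, pow_mul, hζn, one_pow, one_mul]
  rw [rotF, Finset.mul_sum]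
  have h1 : ∀ i : Fin n, ζ ^ (ρ : ℕ) * (φ (t (i + ρ)) * ζ ^ (i : ℕ))
      = φ (t (i + ρ)) * ζ ^ ((i + ρ : Fin n) : ℕ) := by
    intro i
    rw [Fin.add_def]
    simp only [hpow, pow_add]
    ring
  rw [Finset.sum_congr rfl (fun i _ => h1 i)]
  exact Fintype.sum_equiv (Equiv.addRight ρ) _ _ (fun i => rfl)

theorem rotState_congr {n m : ℕ} (y : ℕ → Fin n → ZMod m) (r r' : ℕ → Fin n)
    (s₀ : Fin n → ZMod m) (k : ℕ) (h : ∀ i < k, r i = r' i) :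
    rotState y r s₀ k = rotState y r' s₀ k := by
  induction k with
  | zero => rfl
  | succ k ih =>
    have h2 := ih (fun i hi => h i (by omega))
    show (fun i => (rotState y r s₀ k + y k) (i + r k)) = _
    rw [h2, h k (by omega)]
    rfl

theorem rot_not_canWin {n m : ℕ} (hn : 2 ≤ n) {L : Type} [Field L]
    (φ : ZMod m →+* L) {ζ : L} (hζ0 : ζ ≠ 0) (hζ1 : ζ ≠ 1) (hζn : ζ ^ n = 1) :
    ¬ RotCanWin n m := by
  haveI : NeZero n := ⟨by omega⟩
  rintro ⟨N, y, hw⟩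
  set F : (Fin n → ZMod m) → L := rotF φ ζ with hF
  have key : ∀ M : ℕ, ∃ s₀ r, (∀ k ≤ M, F (rotState y r s₀ k) ≠ 0) ∧
      F (rotState y r s₀ M + y M) ≠ 0 := by
    intro M
    induction M with
    | zero =>
      by_cases hc : (1 : L) + F (y 0) = 0
      · refine ⟨Pi.single ⟨1, hn⟩ 1, fun _ => 0, ?_, ?_⟩
        · intro k hk
          interval_cases k
          show F (Pi.single ⟨1, hn⟩ 1) ≠ 0
          rw [hF, rotF_single]
          simpa using hζ0
        · show F (Pi.single ⟨1, hn⟩ 1 + y 0) ≠ 0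
          rw [hF, rotF_add, rotF_single]
          have hy : rotF φ ζ (y 0) = -1 := by linear_combination hc
          rw [hy]
          intro hx
          exact hζ1 (by linear_combination hx)
      · refine ⟨Pi.single 0 1, fun _ => 0, ?_, ?_⟩
        · intro k hk
          interval_cases k
          show F (Pi.single 0 1) ≠ 0
          rw [hF, rotF_single]
          simp
        · show F (Pi.single 0 1 + y 0) ≠ 0
          rw [hF, rotF_add, rotF_single]
          simpa using hc
    | succ M ih =>
      obtain ⟨s₀, r, h1, h2⟩ := ih
      set d := F (rotState y r s₀ M + y M) with hd
      have hρ : ∃ ρ : Fin n, ∀ F' : L, ζ ^ (ρ : ℕ) * F' = d →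
          F' ≠ 0 ∧ F' + F (y (M + 1)) ≠ 0 := by
        by_cases hde : d + F (y (M + 1)) = 0
        · refine ⟨⟨1, hn⟩, fun F' hF' => ?_⟩
          simp only [pow_one] at hF'
          constructor
          · rintro rfl; rw [mul_zero] at hF'; exact h2 hF'.symm
          · intro hcontra
            have he : F (y (M + 1)) = -d := by linear_combination hde
            rw [he] at hcontra
            have hF'd : F' = d := by linear_combination hcontra - hde + he
            rw [hF'd] at hF'
            have : (ζ - 1) * d = 0 := by linear_combination hF'
            rcases mul_eq_zero.1 this with h | h
            · exact hζ1 (by linear_combination h)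
            · exact h2 h
        · refine ⟨0, fun F' hF' => ?_⟩
          simp only [Fin.val_zero, pow_zero, one_mul] at hF'
          subst hF'
          exact ⟨h2, hde⟩
      obtain ⟨ρ, hρ⟩ := hρ
      classical
      set r' := Function.update r M ρ with hr'
      have hsame : ∀ k ≤ M, rotState y r' s₀ k = rotState y r s₀ k := by
        intro k hk
        apply rotState_congr
        intro i hi
        rw [hr', Function.update_of_ne (by omega)]
      have hstep : rotState y r' s₀ (M + 1)
          = fun i => (rotState y r s₀ M + y M) (i + ρ) := by
        show (fun i => (rotState y r' s₀ M + y M) (i + r' M)) = _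
        rw [hsame M le_rfl, hr', Function.update_self]
      have hmul : ζ ^ (ρ : ℕ) * F (rotState y r' s₀ (M + 1)) = d := by
        rw [hstep, hd, hF]
        exact rotF_rot φ hζn _ ρ
      obtain ⟨hne, hne2⟩ := hρ _ hmul
      refine ⟨s₀, r', ?_, ?_⟩
      · intro k hk
        rcases Nat.lt_or_ge k (M + 1) with hlt | hge
        · rw [hsame k (by omega)]
          exact h1 k (by omega)
        · have : k = M + 1 := by omega
          subst this
          exact hne
      · rw [hF, rotF_add, ← hF]
        exact hne2
  obtain ⟨s₀, r, h1, _⟩ := key N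
  obtain ⟨k, hk, hk0⟩ := hw s₀ r
  exact h1 k hk (by rw [hk0, hF, rotF_zero])

theorem rotation_game_only_if (n m : ℕ) (hn : 1 ≤ n) (hm : 1 ≤ m) (h : RotCanWin n m) :
    n = 1 ∨ m = 1 ∨
      ∃ p a b : ℕ, p.Prime ∧ 0 < a ∧ 0 < b ∧ n = p ^ a ∧ m = p ^ b := by
  rcases eq_or_ne n 1 with h1 | h1
  · exact Or.inl h1
  rcases eq_or_ne m 1 with h2 | h2
  · exact Or.inr (Or.inl h2)
  right; right
  by_contra hcon
  push_neg at hcon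
  have claim : ∃ p q : ℕ, p.Prime ∧ q.Prime ∧ p ∣ m ∧ q ∣ n ∧ p ≠ q := by
    have hP := Nat.minFac_prime h2
    have hQ := Nat.minFac_prime h1
    by_cases hPQ : m.minFac = n.minFac
    · by_cases hnall : ∀ d, d.Prime → d ∣ n → d = m.minFac
      · by_cases hmall : ∀ d, d.Prime → d ∣ m → d = m.minFac
        · exfalso
          have hne : n = m.minFac ^ n.primeFactorsList.length :=
            Nat.eq_prime_pow_of_unique_prime_dvd (by omega) (fun {d} hd hdn => hnall d hd hdn)
          have hme : m = m.minFac ^ m.primeFactorsList.length :=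
            Nat.eq_prime_pow_of_unique_prime_dvd (by omega) (fun {d} hd hdm => hmall d hd hdm)
          have ha : 0 < n.primeFactorsList.length := by
            rcases Nat.eq_zero_or_pos n.primeFactorsList.length with h0 | h0
            · rw [h0, pow_zero] at hne; omega
            · exact h0
          have hb : 0 < m.primeFactorsList.length := by
            rcases Nat.eq_zero_or_pos m.primeFactorsList.length with h0 | h0
            · rw [h0, pow_zero] at hme; omega
            · exact h0
          exact hcon m.minFac _ _ hP ha hb hne hme
        · push_neg at hmall
          obtain ⟨d, hd, hdm, hdne⟩ := hmall
          exact ⟨d, n.minFac, hd, hQ, hdm, Nat.minFac_dvd n, by rw [← hPQ]; exact hdne⟩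
      · push_neg at hnall
        obtain ⟨d, hd, hdn, hdne⟩ := hnall
        exact ⟨m.minFac, d, hP, hd, Nat.minFac_dvd m, hdn, fun he => hdne he.symm⟩
    · exact ⟨m.minFac, n.minFac, hP, hQ, Nat.minFac_dvd m, Nat.minFac_dvd n, hPQ⟩
  obtain ⟨p, q, hp, hq, hpm, hqn, hpq⟩ := claim
  haveI : Fact p.Prime := ⟨hp⟩
  have hnd : ¬ p ∣ q := fun hdvd => hpq ((Nat.prime_dvd_prime_iff_eq hp hq).1 hdvd)
  haveI : NeZero q := ⟨hq.ne_zero⟩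
  haveI : NeZero ((q : ℕ) : ZMod p) := NeZero.of_not_dvd (ZMod p) hnd
  haveI := CyclotomicField.isCyclotomicExtension q (ZMod p)
  obtain ⟨ζ, hζ⟩ :=
    IsCyclotomicExtension.exists_isPrimitiveRoot (ZMod p) (CyclotomicField q (ZMod p)) (S := {q}) (Set.mem_singleton _) hq.ne_zero
  have hζ' : IsPrimitiveRoot ζ q := hζ
  have hζq : ζ ^ q = 1 := hζ'.pow_eq_one
  have hζ0 : ζ ≠ 0 := hζ'.ne_zero hq.ne_zero
  have hζ1 : ζ ≠ 1 := hζ'.ne_one hq.one_lt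
  obtain ⟨c, hc⟩ := hqn
  have hζn : ζ ^ n = 1 := by rw [hc, pow_mul, hζq, one_pow]
  have hn2 : 2 ≤ n := le_trans hq.two_le (Nat.le_of_dvd (by omega) ⟨c, hc⟩)
  exact rot_not_canWin hn2 ((algebraMap (ZMod p) (CyclotomicField q (ZMod p))).comp (ZMod.castHom hpm (ZMod p)))
    hζ0 hζ1 hζn h
end

section
/- For every prime p and every positive integer a, the player can win the (p^a, p) rotation game. -/
/-! ### Abstract strong rotation game -/

/-- The abstract "strong" rotation game: states live in a module `V`, the adversary applies
powers of a fixed endomorphism `σ` both before (`g`) and after (`e`) each move. -/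
def sst {p : ℕ} {V : Type} [AddCommGroup V] [Module (ZMod p) V]
    (σ : Module.End (ZMod p) V) (Y : ℕ → V) (e g : ℕ → ℕ) (s0 : V) : ℕ → V
  | 0 => s0
  | k + 1 => (σ ^ e k) ((σ ^ g k) (sst σ Y e g s0 k) + Y k)

lemma pow_fix {p : ℕ} {V : Type} [AddCommGroup V] [Module (ZMod p) V]
    {σ : Module.End (ZMod p) V} {c : V} (hc : σ c = c) (m : ℕ) (w : ZMod p) :
    (σ ^ m) (w • c) = w • c := by
  induction m with
  | zero => simp
  | succ m ih => rw [pow_succ, Module.End.mul_apply, map_smul, hc, ih]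

lemma exists_fixed {p a : ℕ} (hp : p.Prime) {V : Type} [AddCommGroup V]
    [Module (ZMod p) V] [Nontrivial V] (σ : Module.End (ZMod p) V)
    (hσ : σ ^ (p ^ a) = 1) : ∃ c : V, c ≠ 0 ∧ σ c = c := by
  haveI : Fact p.Prime := ⟨hp⟩
  have hpoly : ((Polynomial.X - 1 : Polynomial (ZMod p))) ^ (p ^ a)
      = Polynomial.X ^ (p ^ a) - 1 := by
    simpa using sub_pow_char_pow (p := p) (Polynomial.X : Polynomial (ZMod p)) 1 a
  have key : ((σ - 1 : Module.End (ZMod p) V)) ^ (p ^ a) = 0 := by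
    have h := congrArg (Polynomial.aeval σ) hpoly
    simpa [hσ] using h
  by_contra hcon
  push_neg at hcon
  have hinj : Function.Injective ((σ - 1 : Module.End (ZMod p) V)) := by
    rw [← LinearMap.ker_eq_bot, LinearMap.ker_eq_bot']
    intro m hm
    by_contra hm0
    apply hcon m hm0
    have hm' : σ m - m = 0 := by simpa [LinearMap.sub_apply] using hm
    exact sub_eq_zero.mp hm'
  have hinjpow : ∀ k : ℕ, Function.Injective (((σ - 1 : Module.End (ZMod p) V)) ^ k) := by
    intro k; induction k with
    | zero => intro x y h; simpa using h
    | succ k ih =>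
      intro x y h
      rw [pow_succ, Module.End.mul_apply, Module.End.mul_apply] at h
      exact hinj (ih h)
  obtain ⟨v, hv⟩ := exists_ne (0 : V)
  have h0 : ((σ - 1 : Module.End (ZMod p) V) ^ (p ^ a)) v
      = ((σ - 1 : Module.End (ZMod p) V) ^ (p ^ a)) 0 := by rw [key]; simp
  exact hv (hinjpow _ h0)

theorem abstract_win (p a : ℕ) (hp : p.Prime) :
    ∀ (n : ℕ) (V : Type) [AddCommGroup V] [Module (ZMod p) V] [Finite V],
      Nat.card V = n → ∀ σ : Module.End (ZMod p) V, σ ^ (p ^ a) = 1 →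
      ∃ N Y, ∀ (s0 : V) (e g : ℕ → ℕ), ∃ k ≤ N, sst σ Y e g s0 k = 0 := by
  intro n
  induction n using Nat.strong_induction_on with
  | _ n IH =>
  intro V _ _ _ hcard σ hσ
  rcases subsingleton_or_nontrivial V with hV | hV
  · exact ⟨0, fun _ => 0, fun s0 e g => ⟨0, le_refl 0, Subsingleton.elim _ _⟩⟩
  obtain ⟨c, hc0, hfix⟩ := exists_fixed hp σ hσ
  set C : Submodule (ZMod p) V := Submodule.span (ZMod p) {c} with hC
  have hcC : c ∈ C := Submodule.mem_span_singleton_self c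
  have hCfix : ∀ (m : ℕ) (w : ZMod p), (σ ^ m) (w • c) = w • c := pow_fix hfix
  have hCmap : C ≤ C.comap σ := by
    rw [hC, Submodule.span_le]
    intro x hx
    rcases Set.mem_singleton_iff.mp hx with rfl
    exact Submodule.mem_comap.mpr (by rw [hfix]; exact Submodule.mem_span_singleton_self x)
  set σ' := Submodule.mapQ C C σ hCmap with hσ'def
  have hmapQpow : ∀ (m : ℕ) (x : V), (σ' ^ m) (C.mkQ x) = C.mkQ ((σ ^ m) x) := by
    intro m
    induction m with
    | zero => intro x; simp
    | succ m ih =>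
      intro x
      rw [pow_succ, pow_succ, Module.End.mul_apply, Module.End.mul_apply]
      have h1 : σ' (C.mkQ x) = C.mkQ (σ x) := by
        rw [hσ'def]; simp [Submodule.mkQ_apply, Submodule.mapQ_apply]
      rw [h1, ih]
  have hσ'pow : σ' ^ (p ^ a) = 1 := by
    apply LinearMap.ext; intro q
    obtain ⟨x, rfl⟩ := C.mkQ_surjective q
    rw [hmapQpow, hσ]; simp
  haveI : Finite (V ⧸ C) := Finite.of_surjective _ C.mkQ_surjective
  have hlt : Nat.card (V ⧸ C) < n := by
    rw [← hcard]
    have hle : Nat.card (V ⧸ C) ≤ Nat.card V := Nat.card_le_card_of_surjective _ C.mkQ_surjective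
    rcases lt_or_eq_of_le hle with h | h
    · exact h
    · exfalso
      have hbij : Function.Bijective C.mkQ :=
        (Nat.bijective_iff_surjective_and_card C.mkQ).mpr ⟨C.mkQ_surjective, h.symm⟩
      apply hc0
      apply hbij.injective
      simp only [map_zero]
      rwa [Submodule.mkQ_apply, Submodule.Quotient.mk_eq_zero]
  obtain ⟨M, Ybar, hwin⟩ := IH (Nat.card (V ⧸ C)) hlt (V ⧸ C) rfl σ' hσ'pow
  choose lift hlift using fun k => C.mkQ_surjective (Ybar k)
  have hp2 : 2 ≤ p := hp.two_le
  set Y : ℕ → V := fun j => if j % p = p - 1 then lift (j / p) else c with hYdef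
  refine ⟨M * p + (p - 1), Y, ?_⟩
  intro s0 e g
  set s : ℕ → V := sst σ Y e g s0 with hs
  have hstep : ∀ j, s (j + 1) = (σ ^ e j) ((σ ^ g j) (s j) + Y j) := fun j => rfl
  have qrec : ∀ j, C.mkQ (s (j + 1)) = (σ' ^ e j) ((σ' ^ g j) (C.mkQ (s j)) + C.mkQ (Y j)) := by
    intro j
    rw [hstep j, ← hmapQpow, map_add, ← hmapQpow]
  have hYc : ∀ k t, t < p - 1 → Y (k * p + t) = c := by
    intro k t ht
    have hmod : (k * p + t) % p = t := by
      rw [mul_comm k p, Nat.mul_add_mod, Nat.mod_eq_of_lt (by omega)]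
    simp [hYdef, hmod, ht.ne]
  have hYlift : ∀ k, Y (k * p + (p - 1)) = lift k := by
    intro k
    have hmod : (k * p + (p - 1)) % p = p - 1 := by
      rw [mul_comm k p, Nat.mul_add_mod, Nat.mod_eq_of_lt (by omega)]
    have hdiv : (k * p + (p - 1)) / p = k := by
      rw [mul_comm k p, Nat.mul_add_div (by omega), Nat.div_eq_of_lt (by omega), add_zero]
    simp [hYdef, hmod, hdiv]
  have hmkc : C.mkQ c = 0 := by
    rw [Submodule.mkQ_apply, Submodule.Quotient.mk_eq_zero]; exact hcC
  have htrans : ∀ (b t : ℕ), (∀ i, i < t → Y (b + i) = c) →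
      ∃ m, C.mkQ (s (b + t)) = (σ' ^ m) (C.mkQ (s b)) := by
    intro b t
    induction t with
    | zero => exact fun _ => ⟨0, by simp⟩
    | succ t ih =>
      intro h
      obtain ⟨m, hm⟩ := ih (fun i hi => h i (Nat.lt_succ_of_lt hi))
      refine ⟨e (b + t) + (g (b + t) + m), ?_⟩
      rw [show b + (t + 1) = (b + t) + 1 from rfl, qrec, h t (Nat.lt_succ_self t), hmkc,
        add_zero, hm, pow_add, Module.End.mul_apply, pow_add, Module.End.mul_apply]
  have key : ∀ k : ℕ, ∃ m1 m2 : ℕ,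
      C.mkQ (s ((k + 1) * p)) = (σ' ^ m1) ((σ' ^ m2) (C.mkQ (s (k * p))) + Ybar k) := by
    intro k
    obtain ⟨m, hm⟩ := htrans (k * p) (p - 1) (fun i hi => hYc k i hi)
    refine ⟨e (k * p + (p - 1)), g (k * p + (p - 1)) + m, ?_⟩
    have hidx : (k + 1) * p = (k * p + (p - 1)) + 1 := by rw [Nat.succ_mul]; omega
    rw [hidx, qrec, hYlift k, hlift k, hm, pow_add, Module.End.mul_apply]
  choose e' g' hkey using key
  have hqst : ∀ k, sst σ' Ybar e' g' (C.mkQ s0) k = C.mkQ (s (k * p)) := by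
    intro k
    induction k with
    | zero =>
      show C.mkQ s0 = C.mkQ (s (0 * p))
      rw [Nat.zero_mul]
      rfl
    | succ k ih =>
      show (σ' ^ e' k) ((σ' ^ g' k) (sst σ' Ybar e' g' (C.mkQ s0) k) + Ybar k)
        = C.mkQ (s ((k + 1) * p))
      rw [ih, hkey k]
  obtain ⟨k', hk'M, hk'0⟩ := hwin (C.mkQ s0) e' g'
  rw [hqst] at hk'0
  have hmem : s (k' * p) ∈ C := by
    rwa [Submodule.mkQ_apply, Submodule.Quotient.mk_eq_zero] at hk'0
  have hmem' : s (k' * p) ∈ Submodule.span (ZMod p) {c} := by rw [← hC]; exact hmem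
  obtain ⟨u, hu⟩ := Submodule.mem_span_singleton.mp hmem'
  have stay : ∀ t, t ≤ p - 1 → s (k' * p + t) = (u + (t : ZMod p)) • c := by
    intro t
    induction t with
    | zero => intro _; simpa using hu.symm
    | succ t ih =>
      intro ht
      have ht' : t < p - 1 := by omega
      have h1 := ih (le_of_lt ht')
      have hsm : (u + (t : ZMod p)) • c + c = (u + ((t + 1 : ℕ) : ZMod p)) • c := by
        push_cast
        simp [add_smul, one_smul, add_assoc]
      rw [show k' * p + (t + 1) = (k' * p + t) + 1 from rfl, hstep, h1, hYc k' t ht',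
        hCfix, hsm, hCfix]
  haveI : NeZero p := ⟨hp.pos.ne'⟩
  refine ⟨k' * p + (-u).val, ?_, ?_⟩
  · have h1 : k' * p ≤ M * p := Nat.mul_le_mul_right p hk'M
    have h2 : (-u).val < p := ZMod.val_lt _
    omega
  · show s (k' * p + (-u).val) = 0
    have h2 : (-u).val < p := ZMod.val_lt _
    rw [stay (-u).val (by omega)]
    have hcast : (((-u).val : ℕ) : ZMod p) = -u := ZMod.natCast_rightInverse (-u)
    rw [hcast, add_neg_cancel, zero_smul]

/-! ### The concrete rotation game -/

/-- The rotation-by-one endomorphism. -/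
def rotEnd (p n : ℕ) [NeZero n] : Module.End (ZMod p) (Fin n → ZMod p) where
  toFun x := fun i => x (i + 1)
  map_add' _ _ := rfl
  map_smul' _ _ := rfl

open Fin.NatCast in
lemma rotEnd_pow (p n : ℕ) [NeZero n] (m : ℕ) (x : Fin n → ZMod p) (i : Fin n) :
    ((rotEnd p n) ^ m) x i = x (i + (m : Fin n)) := by
  induction m generalizing x i with
  | zero => simp
  | succ m ih =>
    rw [pow_succ, Module.End.mul_apply, ih]
    show x (i + (m : Fin n) + 1) = _
    rw [Nat.cast_add_one, ← add_assoc]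

lemma rot_eq_sst (p n : ℕ) [NeZero n] (y : ℕ → Fin n → ZMod p) (r : ℕ → Fin n)
    (s0 : Fin n → ZMod p) (k : ℕ) :
    rotState y r s0 k = sst (rotEnd p n) y (fun k => (r k).val) (fun _ => 0) s0 k := by
  induction k with
  | zero => rfl
  | succ k ih =>
    funext i
    simp only [rotState, sst, pow_zero, Module.End.one_apply, rotEnd_pow, ih,
      Fin.cast_val_eq_self]

theorem win_prime_power_positions (p a : ℕ) (hp : p.Prime) (ha : 0 < a) :
    RotCanWin (p ^ a) p := by
  haveI : NeZero p := ⟨hp.pos.ne'⟩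
  haveI : NeZero (p ^ a) := ⟨pow_ne_zero a hp.pos.ne'⟩
  have hσrot : (rotEnd p (p ^ a)) ^ (p ^ a) = 1 := by
    apply LinearMap.ext; intro x; funext i
    rw [rotEnd_pow]
    simp [Fin.natCast_self]
  obtain ⟨N, Y, hwin⟩ := abstract_win p a hp (Nat.card (Fin (p ^ a) → ZMod p))
    (Fin (p ^ a) → ZMod p) rfl (rotEnd p (p ^ a)) hσrot
  refine ⟨N, Y, fun s0 r => ?_⟩
  obtain ⟨k, hk, h0⟩ := hwin s0 (fun k => (r k).val) (fun _ => 0)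
  exact ⟨k, hk, by rw [rot_eq_sst]; exact h0⟩
end

section
/- Let p be a prime, a a positive integer, and n = p^a. For each j with 0 ≤ j ≤ n − 1, let x_j : Fin n → ZMod p be the vector whose i-th entry is the binomial coefficient C(i, j) reduced mod p. Then for every j with 0 ≤ j ≤ n − 1 and every k : Fin n, the vector x_j − x'_j, where x'_j is the cyclic shift of x_j by k (i.e., (x'_j) i = x_j (i + k)), lies in the linear span over ZMod p of the vectors x_0, x_1, …, x_{j−1}. -/
open Finset
open Fin.NatCast

lemma aux_add_pow (p : ℕ) (hp : p.Prime) (a i j : ℕ) (hj : j < p ^ a) :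
    (((i + p ^ a).choose j : ℕ) : ZMod p) = ((i.choose j : ℕ) : ZMod p) := by
  rw [Nat.add_choose_eq]
  push_cast
  rw [Finset.sum_eq_single (j, 0)]
  · simp
  · rintro ⟨b, c⟩ hbc hne
    rw [Finset.HasAntidiagonal.mem_antidiagonal] at hbc
    have hc0 : c ≠ 0 := by
      rintro rfl
      exact hne (by simp [← hbc])
    have hcp : c ≠ p ^ a := by omega
    have hz : (((p ^ a).choose c : ℕ) : ZMod p) = 0 := by
      rw [ZMod.natCast_eq_zero_iff]
      exact hp.dvd_choose_pow hc0 hcp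
    rw [hz, mul_zero]
  · intro h
    exact absurd (by simp) h

lemma aux_mul_add (p : ℕ) (hp : p.Prime) (a j : ℕ) (hj : j < p ^ a) :
    ∀ q r : ℕ, (((q * p ^ a + r).choose j : ℕ) : ZMod p) = ((r.choose j : ℕ) : ZMod p) := by
  intro q
  induction q with
  | zero => simp
  | succ q ih =>
    intro r
    have h : (q + 1) * p ^ a + r = (q * p ^ a + r) + p ^ a := by ring
    rw [h, aux_add_pow p hp a _ j hj, ih r]

lemma aux_mod (p : ℕ) (hp : p.Prime) (a i j : ℕ) (hj : j < p ^ a) :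
    ((i.choose j : ℕ) : ZMod p) = (((i % p ^ a).choose j : ℕ) : ZMod p) := by
  conv_lhs => rw [show i = i / p ^ a * p ^ a + i % p ^ a from by
    rw [mul_comm]; exact (Nat.div_add_mod i (p ^ a)).symm]
  rw [aux_mul_add p hp a j hj]

theorem binomial_shift_in_span (p : ℕ) (hp : p.Prime) (a : ℕ) (ha : 0 < a)
    (n : ℕ) (hn : n = p ^ a)
    (x : Fin n → Fin n → ZMod p)
    (hx : ∀ j i : Fin n, x j i = (Nat.choose i.val j.val : ZMod p))
    (j k : Fin n) :
    (x j - fun i => x j (i + k)) ∈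
      Submodule.span (ZMod p) (x '' {j' : Fin n | j' < j}) := by
  subst hn
  haveI : NeZero (p ^ a) := ⟨pow_ne_zero a hp.ne_zero⟩
  have key : (x j - fun i => x j (i + k)) =
      ∑ l ∈ Finset.Iio j,
        (-(((k : ℕ).choose ((j : ℕ) - (l : ℕ)) : ℕ) : ZMod p)) • x l := by
    funext i
    simp only [Pi.sub_apply, Finset.sum_apply, Pi.smul_apply, smul_eq_mul]
    rw [hx j i, hx j (i + k)]
    have hik : ((i + k : Fin (p ^ a)) : ℕ) = ((i : ℕ) + (k : ℕ)) % p ^ a := by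
      simp [Fin.add_def]
    rw [hik, ← aux_mod p hp a _ _ j.isLt, Nat.add_choose_eq,
      Finset.Nat.sum_antidiagonal_eq_sum_range_succ_mk]
    push_cast
    rw [Finset.sum_range_succ]
    simp only [Nat.sub_self, Nat.choose_zero_right, Nat.cast_one, mul_one]
    have hsum : ∑ b ∈ Finset.range (j : ℕ),
        ((i : ℕ).choose b : ZMod p) * ((k : ℕ).choose ((j : ℕ) - b) : ZMod p)
        = ∑ l ∈ Finset.Iio j,
          ((k : ℕ).choose ((j : ℕ) - (l : ℕ)) : ZMod p) * x l i := by
      refine Finset.sum_nbij' (fun b => (b : Fin (p ^ a))) (fun l => (l : ℕ))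
        ?_ ?_ ?_ ?_ ?_
      · intro b hb
        rw [Finset.mem_range] at hb
        rw [Finset.mem_Iio]
        have hblt : b < p ^ a := lt_trans hb j.isLt
        rw [Fin.lt_def, Fin.val_cast_of_lt hblt]
        exact hb
      · intro l hl
        rw [Finset.mem_Iio] at hl
        rw [Finset.mem_range]
        exact hl
      · intro b hb
        rw [Finset.mem_range] at hb
        exact Fin.val_cast_of_lt (lt_trans hb j.isLt)
      · intro l _
        exact Fin.cast_val_eq_self l
      · intro b hb
        rw [Finset.mem_range] at hb
        have hblt : b < p ^ a := lt_trans hb j.isLt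
        rw [hx, Fin.val_cast_of_lt hblt, mul_comm]
    rw [hsum]
    simp only [neg_mul, Finset.sum_neg_distrib]
    ring
  rw [key]
  refine Submodule.sum_mem _ fun l hl => ?_
  exact Submodule.smul_mem _ _ (Submodule.subset_span ⟨l, Finset.mem_Iio.mp hl, rfl⟩)
end

section
/- For every prime p and all positive integers a and b, there exists a winning sequence of moves of length p^{b·p^a} − 1 = m^n − 1 for the (p^a, p^b) rotation game; in particular the player can win the (p^a, p^b) rotation game. -/
set_option linter.unusedSectionVars false in
section
namespace RotAux

open Fin.NatCast

variable (n m : ℕ) [NeZero n] [NeZero m]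

abbrev V := Fin n → ZMod m

def sig : Module.End (ZMod m) (V n m) where
  toFun x := fun i => x (i + 1)
  map_add' _ _ := rfl
  map_smul' _ _ := rfl

variable {n m}

lemma sig_pow_apply (k : ℕ) (x : V n m) (i : Fin n) :
    ((sig n m) ^ k) x i = x (i + (k : Fin n)) := by
  induction k generalizing x with
  | zero => simp
  | succ k ih =>
      rw [pow_succ, Module.End.mul_apply]
      show ((sig n m) ^ k) (fun i => x (i + 1)) i = _
      rw [ih]
      congr 1
      push_cast
      abel

lemma rot_eq_pow (r : Fin n) (x : V n m) :
    (fun i => x (i + r)) = ((sig n m) ^ (r.val)) x := by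
  funext i
  rw [sig_pow_apply, Fin.cast_val_eq_self]

lemma sig_pow_n : (sig n m) ^ n = 1 := by
  apply LinearMap.ext; intro x; funext i
  rw [sig_pow_apply]
  simp [Fin.natCast_self]

/-- Invariance of a subgroup under all rotations. -/
def Inv (G : AddSubgroup (V n m)) : Prop :=
  ∀ x ∈ G, ∀ r : Fin n, (fun i => x (i + r)) ∈ G

variable (n m) in
/-- scalar multiplication by `p` as an endomorphism -/
def Pend (p : ℕ) : Module.End (ZMod m) (V n m) :=
  algebraMap (ZMod m) _ ((p : ZMod m))

variable (n m) in
def Dend : Module.End (ZMod m) (V n m) := sig n m - 1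

lemma Pend_apply (p : ℕ) (x : V n m) : Pend n m p x = (p : ZMod m) • x := by
  simp only [Pend, Module.algebraMap_end_apply]

lemma Dend_apply (x : V n m) : Dend n m x = (sig n m) x - x := by
  simp [Dend, LinearMap.sub_apply]

lemma Pend_commute (p : ℕ) (A : Module.End (ZMod m) (V n m)) :
    Pend n m p * A = A * Pend n m p :=
  Algebra.commutes _ _

/-- The derived subgroup `pG + (σ - 1)G`. -/
def Gder (p : ℕ) (G : AddSubgroup (V n m)) : AddSubgroup (V n m) :=
  G.map (Pend n m p).toAddMonoidHom ⊔ G.map (Dend n m).toAddMonoidHom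

lemma mem_Gder (p : ℕ) (G : AddSubgroup (V n m)) {x : V n m} (hx : x ∈ Gder p G) :
    ∃ u ∈ G, ∃ v ∈ G, x = Pend n m p u + Dend n m v := by
  rcases (AddSubgroup.mem_sup).1 hx with ⟨y, hy, z, hz, rfl⟩
  rcases AddSubgroup.mem_map.1 hy with ⟨u, hu, rfl⟩
  rcases AddSubgroup.mem_map.1 hz with ⟨v, hv, rfl⟩
  exact ⟨u, hu, v, hv, rfl⟩

lemma Pend_mem_Gder (p : ℕ) (G : AddSubgroup (V n m)) {u : V n m} (hu : u ∈ G) :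
    Pend n m p u ∈ Gder p G :=
  AddSubgroup.mem_sup_left (AddSubgroup.mem_map.2 ⟨u, hu, rfl⟩)

lemma Dend_mem_Gder (p : ℕ) (G : AddSubgroup (V n m)) {u : V n m} (hu : u ∈ G) :
    Dend n m u ∈ Gder p G :=
  AddSubgroup.mem_sup_right (AddSubgroup.mem_map.2 ⟨u, hu, rfl⟩)

lemma sig_mem {G : AddSubgroup (V n m)} (hG : Inv G) {x : V n m} (hx : x ∈ G) :
    (sig n m) x ∈ G := hG x hx 1

lemma sig_pow_mod (k : ℕ) : (sig n m) ^ k = (sig n m) ^ (k % n) := by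
  conv_lhs => rw [← Nat.div_add_mod k n]
  rw [pow_add, pow_mul, sig_pow_n, one_pow, one_mul]

lemma sig_pow_mem {G : AddSubgroup (V n m)} (hG : Inv G) (k : ℕ) {x : V n m} (hx : x ∈ G) :
    ((sig n m) ^ k) x ∈ G := by
  have := hG x hx (k : Fin n)
  rw [rot_eq_pow, Fin.val_natCast] at this
  rwa [sig_pow_mod]

lemma Gder_le (p : ℕ) {G : AddSubgroup (V n m)} (hG : Inv G) : Gder p G ≤ G := by
  intro x hx
  rcases mem_Gder p G hx with ⟨u, hu, v, hv, rfl⟩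
  have h1 : Pend n m p u ∈ G := by
    rw [Pend_apply, Nat.cast_smul_eq_nsmul]
    exact AddSubgroup.nsmul_mem G hu p
  have h2 : Dend n m v ∈ G := by
    rw [Dend_apply]
    exact sub_mem (sig_mem hG hv) hv
  exact add_mem h1 h2

lemma Inv_Gder (p : ℕ) {G : AddSubgroup (V n m)} (hG : Inv G) : Inv (Gder p G) := by
  intro x hx r
  rcases mem_Gder p G hx with ⟨u, hu, v, hv, rfl⟩
  rw [rot_eq_pow]
  set R := (sig n m) ^ (r.val) with hR
  have hcomm : ∀ A : Module.End (ZMod m) (V n m), Commute (sig n m) A → R * A = A * R := by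
    intro A h
    exact ((h.pow_left r.val)).eq
  have h1 : R (Pend n m p u + Dend n m v) = Pend n m p (R u) + Dend n m (R v) := by
    rw [map_add]
    congr 1
    · rw [← Module.End.mul_apply, ← Module.End.mul_apply, Pend_commute]
    · rw [← Module.End.mul_apply, ← Module.End.mul_apply,
        hcomm (Dend n m) (by simp [Dend, Commute.sub_right, Commute.one_right])]
  rw [h1]
  exact add_mem (Pend_mem_Gder p G (sig_pow_mem hG r.val hu))
    (Dend_mem_Gder p G (sig_pow_mem hG r.val hv))

/-- Rotations act trivially modulo the derived subgroup. -/
lemma sig_pow_sub_mem (p : ℕ) {G : AddSubgroup (V n m)} (hG : Inv G) (k : ℕ)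
    {z : V n m} (hz : z ∈ G) : ((sig n m) ^ k) z - z ∈ Gder p G := by
  induction k with
  | zero => simpa using (Gder p G).zero_mem
  | succ k ih =>
      have h1 : ((sig n m) ^ (k+1)) z - z
          = Dend n m (((sig n m) ^ k) z) + (((sig n m) ^ k) z - z) := by
        rw [Dend_apply]
        rw [pow_succ', Module.End.mul_apply]
        abel
      rw [h1]
      exact add_mem (Dend_mem_Gder p G (sig_pow_mem hG k hz)) ih

section Nilpotent

open Polynomial

variable (p a b : ℕ)

lemma zmod_p_dvd (hp : p.Prime) (hb : 0 < b) {x : ZMod (p ^ b)}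
    (hx : (ZMod.castHom (dvd_pow_self p hb.ne') (ZMod p)) x = 0) :
    ∃ c : ZMod (p ^ b), x = (p : ZMod (p ^ b)) * c := by
  haveI : NeZero (p ^ b) := ⟨pow_ne_zero _ hp.ne_zero⟩
  have hval : x = ((x.val : ℕ) : ZMod (p ^ b)) := (ZMod.natCast_rightInverse x).symm
  have h2 : ((x.val : ℕ) : ZMod p) = 0 := by
    rw [← map_natCast (ZMod.castHom (dvd_pow_self p hb.ne') (ZMod p)), ← hval]
    exact hx
  rw [ZMod.natCast_eq_zero_iff] at h2
  obtain ⟨c, hc⟩ := h2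
  exact ⟨(c : ZMod (p ^ b)), by rw [hval, hc]; push_cast; ring⟩

lemma key_poly (hp : p.Prime) (ha : 0 < a) (hb : 0 < b) :
    ∃ w : Polynomial (ZMod (p ^ b)),
      (X - 1) ^ (p ^ a) = (X ^ (p ^ a) - 1) + C ((p : ZMod (p ^ b))) * w := by
  haveI : Fact p.Prime := ⟨hp⟩
  set q : Polynomial (ZMod (p ^ b)) := (X - 1) ^ (p ^ a) - (X ^ (p ^ a) - 1) with hq
  have hmap : q.map (ZMod.castHom (dvd_pow_self p hb.ne') (ZMod p)) = 0 := by
    rw [hq]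
    push_cast [Polynomial.map_sub, Polynomial.map_pow, Polynomial.map_one, Polynomial.map_X]
    rw [sub_pow_char_pow, one_pow]
    ring
  have hdvd : C ((p : ZMod (p ^ b))) ∣ q := by
    rw [Polynomial.C_dvd_iff_dvd_coeff]
    intro i
    have : (ZMod.castHom (dvd_pow_self p hb.ne') (ZMod p)) (q.coeff i) = 0 := by
      rw [← Polynomial.coeff_map, hmap, Polynomial.coeff_zero]
    obtain ⟨c, hc⟩ := zmod_p_dvd p b hp hb this
    exact ⟨c, hc⟩
  obtain ⟨w, hw⟩ := hdvd
  exact ⟨w, by rw [← hw, hq]; ring⟩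

lemma Dend_pow_n (hp : p.Prime) (ha : 0 < a) (hb : 0 < b) :
    haveI : NeZero (p ^ a) := ⟨pow_ne_zero _ hp.ne_zero⟩
    haveI : NeZero (p ^ b) := ⟨pow_ne_zero _ hp.ne_zero⟩
    ∃ W, (Dend (p ^ a) (p ^ b)) ^ (p ^ a) = Pend (p ^ a) (p ^ b) p * W := by
  haveI : NeZero (p ^ a) := ⟨pow_ne_zero _ hp.ne_zero⟩
  haveI : NeZero (p ^ b) := ⟨pow_ne_zero _ hp.ne_zero⟩
  obtain ⟨w, hw⟩ := key_poly p a b hp ha hb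
  refine ⟨Polynomial.aeval (sig (p ^ a) (p ^ b)) w, ?_⟩
  have := congrArg (Polynomial.aeval (sig (p ^ a) (p ^ b))) hw
  simp only [map_add, map_sub, map_pow, map_mul, map_one, Polynomial.aeval_X,
    Polynomial.aeval_C] at this
  rw [sig_pow_n] at this
  simp only [sub_self, zero_add] at this
  rw [Dend]
  rw [this]
  rfl

lemma nilpotent_end (hp : p.Prime) (ha : 0 < a) (hb : 0 < b) (i j : ℕ)
    (hij : b * p ^ a ≤ i + j) :
    haveI : NeZero (p ^ a) := ⟨pow_ne_zero _ hp.ne_zero⟩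
    haveI : NeZero (p ^ b) := ⟨pow_ne_zero _ hp.ne_zero⟩
    (Pend (p ^ a) (p ^ b) p) ^ i * (Dend (p ^ a) (p ^ b)) ^ j = 0 := by
  haveI : NeZero (p ^ a) := ⟨pow_ne_zero _ hp.ne_zero⟩
  haveI : NeZero (p ^ b) := ⟨pow_ne_zero _ hp.ne_zero⟩
  set P := Pend (p ^ a) (p ^ b) p with hP
  set D := Dend (p ^ a) (p ^ b) with hD
  obtain ⟨W, hW⟩ := Dend_pow_n p a b hp ha hb
  set q := j / p ^ a with hqdef
  set s := j % p ^ a with hsdef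
  have hn1 : 0 < p ^ a := pow_pos hp.pos a
  have hj : j = p ^ a * q + s := (Nat.div_add_mod j (p ^ a)).symm
  have hs : s < p ^ a := Nat.mod_lt _ hn1
  have hbq : b ≤ i + q := by nlinarith
  have hcomm : Commute P W := (Pend_commute p W)
  have hDj : D ^ j = P ^ q * (W ^ q * D ^ s) := by
    rw [hj, pow_add, pow_mul, hW, hcomm.mul_pow, mul_assoc]
  have hPzero : P ^ (i + q) = 0 := by
    have h1 : ((p : ZMod (p ^ b))) ^ b = 0 := by
      rw [← Nat.cast_pow, ZMod.natCast_self]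
    have h2 : ((p : ZMod (p ^ b))) ^ (i + q) = 0 := by
      have : i + q = b + (i + q - b) := by omega
      rw [this, pow_add, h1, zero_mul]
    rw [hP, Pend, ← map_pow, h2, map_zero]
  rw [hDj, ← mul_assoc, ← pow_add, hPzero, zero_mul]

lemma Gder_lt (hp : p.Prime) (ha : 0 < a) (hb : 0 < b) :
    haveI : NeZero (p ^ a) := ⟨pow_ne_zero _ hp.ne_zero⟩
    haveI : NeZero (p ^ b) := ⟨pow_ne_zero _ hp.ne_zero⟩
    ∀ {G : AddSubgroup (V (p ^ a) (p ^ b))}, Inv G → G ≠ ⊥ → Gder p G < G := by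
  haveI : NeZero (p ^ a) := ⟨pow_ne_zero _ hp.ne_zero⟩
  haveI : NeZero (p ^ b) := ⟨pow_ne_zero _ hp.ne_zero⟩
  intro G hG hne
  refine lt_of_le_of_ne (Gder_le p hG) ?_
  intro hEq
  apply hne
  have hPc := Pend_commute (n := p ^ a) (m := p ^ b) p
  set T : ℕ → AddSubgroup (V (p ^ a) (p ^ b)) := fun k =>
    AddSubgroup.closure {z | ∃ x ∈ G, ∃ i j, i + j = k ∧
      z = (Pend (p ^ a) (p ^ b) p ^ i * Dend (p ^ a) (p ^ b) ^ j) x} with hT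
  have step : ∀ k, T k ≤ T (k + 1) := by
    intro k
    rw [hT]
    apply AddSubgroup.closure_le _ |>.2
    rintro z ⟨x, hx, i, j, hij, rfl⟩
    have hx' : x ∈ Gder p G := by rw [hEq]; exact hx
    obtain ⟨u, hu, v, hv, rfl⟩ := mem_Gder p G hx'
    have h1 : (Pend (p ^ a) (p ^ b) p ^ i * Dend (p ^ a) (p ^ b) ^ j)
          (Pend (p ^ a) (p ^ b) p u + Dend (p ^ a) (p ^ b) v)
        = (Pend (p ^ a) (p ^ b) p ^ (i + 1) * Dend (p ^ a) (p ^ b) ^ j) u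
          + (Pend (p ^ a) (p ^ b) p ^ i * Dend (p ^ a) (p ^ b) ^ (j + 1)) v := by
      have hA : (Pend (p ^ a) (p ^ b) p ^ i * Dend (p ^ a) (p ^ b) ^ j)
            (Pend (p ^ a) (p ^ b) p u)
          = (Pend (p ^ a) (p ^ b) p ^ (i + 1) * Dend (p ^ a) (p ^ b) ^ j) u := by
        rw [← Module.End.mul_apply, mul_assoc, ← hPc, ← mul_assoc, ← pow_succ]
      have hB : (Pend (p ^ a) (p ^ b) p ^ i * Dend (p ^ a) (p ^ b) ^ j)
            (Dend (p ^ a) (p ^ b) v)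
          = (Pend (p ^ a) (p ^ b) p ^ i * Dend (p ^ a) (p ^ b) ^ (j + 1)) v := by
        rw [← Module.End.mul_apply, mul_assoc, ← pow_succ]
      rw [map_add, hA, hB]
    rw [h1]
    exact add_mem
      (AddSubgroup.subset_closure ⟨u, hu, i + 1, j, by omega, rfl⟩)
      (AddSubgroup.subset_closure ⟨v, hv, i, j + 1, by omega, rfl⟩)
  have hGT : ∀ k, G ≤ T k := by
    intro k
    induction k with
    | zero =>
        intro x hx
        exact AddSubgroup.subset_closure ⟨x, hx, 0, 0, rfl, by simp⟩
    | succ k ih => exact le_trans ih (step k)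
  have hbot : T (b * p ^ a) ≤ ⊥ := by
    rw [hT]
    apply AddSubgroup.closure_le _ |>.2
    rintro z ⟨x, hx, i, j, hij, rfl⟩
    have h0 : Pend (p ^ a) (p ^ b) p ^ i * Dend (p ^ a) (p ^ b) ^ j = 0 :=
      nilpotent_end p a b hp ha hb i j (le_of_eq hij.symm)
    simp [h0]
  exact le_bot_iff.1 (le_trans (hGT (b * p ^ a)) hbot)

end Nilpotent

section Good

lemma succ_div_of_mod (s k : ℕ) (hs : 0 < s) (h : k % s = s - 1) :
    (k + 1) / s = k / s + 1 := by
  have h1 := Nat.div_add_mod k s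
  refine ((Nat.div_mod_unique (c := 0) (d := k / s + 1) hs).2 ⟨?_, hs⟩).1
  rw [Nat.mul_succ]
  generalize s * (k / s) = M at h1 ⊢
  omega

lemma succ_div_of_mod_ne (s k : ℕ) (hs : 0 < s) (h : k % s ≠ s - 1) :
    (k + 1) / s = k / s := by
  have h1 := Nat.div_add_mod k s
  have h2 := Nat.mod_lt k hs
  refine ((Nat.div_mod_unique (c := k % s + 1) (d := k / s) hs).2 ⟨?_, by omega⟩).1
  generalize s * (k / s) = M at h1 ⊢
  omega

lemma block_mod (s i j : ℕ) (hs : 0 < s) (hj : j < s) : (i * s + j) % s = j := by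
  rw [show i * s + j = j + s * i by ring, Nat.add_mul_mod_self_left]
  exact Nat.mod_eq_of_lt hj

theorem good (p a b : ℕ) (hp : p.Prime) (ha : 0 < a) (hb : 0 < b) :
    haveI : NeZero (p ^ a) := ⟨pow_ne_zero _ hp.ne_zero⟩
    haveI : NeZero (p ^ b) := ⟨pow_ne_zero _ hp.ne_zero⟩
    ∀ N (G : AddSubgroup (V (p ^ a) (p ^ b))), Nat.card G ≤ N → Inv G →
    ∃ y : ℕ → V (p ^ a) (p ^ b), (∀ k, y k ∈ G) ∧
      ∀ s₀ ∈ G, ∀ r : ℕ → Fin (p ^ a),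
        ∃ k ≤ Nat.card G - 1, rotState y r s₀ k = 0 := by
  haveI : NeZero (p ^ a) := ⟨pow_ne_zero _ hp.ne_zero⟩
  haveI : NeZero (p ^ b) := ⟨pow_ne_zero _ hp.ne_zero⟩
  intro N
  induction N with
  | zero =>
      intro G hcard hG
      have : 0 < Nat.card G := Nat.card_pos
      omega
  | succ N IH =>
    intro G hcard hG
    by_cases hbot : G = ⊥
    · subst hbot
      refine ⟨fun _ => 0, fun _ => zero_mem _, ?_⟩
      intro s₀ hs₀ r
      exact ⟨0, Nat.zero_le _, by simpa [rotState] using (AddSubgroup.mem_bot).1 hs₀⟩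
    · set G' := Gder p G with hG'def
      have hlt : G' < G := Gder_lt p a b hp ha hb hG hbot
      have hle : G' ≤ G := hlt.le
      have hInv' : Inv G' := Inv_Gder p hG
      have hcardlt : Nat.card G' < Nat.card G := by
        have h1 : (G' : Set (V (p ^ a) (p ^ b))) ⊂ (G : Set (V (p ^ a) (p ^ b))) := by
          rw [Set.ssubset_iff_of_subset (by exact_mod_cast hle)]
          obtain ⟨x, hxG, hxG'⟩ := SetLike.exists_of_lt hlt
          exact ⟨x, hxG, hxG'⟩
        have h2 := Set.ncard_lt_ncard h1 (Set.toFinite _)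
        rwa [← Nat.card_coe_set_eq, ← Nat.card_coe_set_eq] at h2
      obtain ⟨v, hvmem, hvwin⟩ := IH G' (by omega) hInv'
      set s1 := Nat.card G' with hs1def
      have hs1pos : 0 < s1 := Nat.card_pos
      set G'' := G'.addSubgroupOf G with hG''def
      have hcardG'' : Nat.card G'' = s1 :=
        Nat.card_congr (AddSubgroup.addSubgroupOfEquivOfLe hle).toEquiv
      set t1 := Nat.card (G ⧸ G'') with ht1def
      have hcardG : Nat.card G = t1 * s1 := by
        rw [AddSubgroup.card_eq_card_quotient_mul_card_addSubgroup G'', hcardG'']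
      have ht1pos : 0 < t1 := Nat.card_pos
      have e : G ⧸ G'' ≃ Fin t1 := Nat.equivFinOfCardPos ht1pos.ne'
      set w : ℕ → G := fun i => if h : i < t1 then (e.symm ⟨i, h⟩).out else 0 with hwdef
      have hcov : ∀ g : G, ∃ i < t1, ((g : V (p ^ a) (p ^ b)) + (w i : V (p ^ a) (p ^ b))
          - (w 0 : V (p ^ a) (p ^ b))) ∈ G' := by
        intro g
        set q : G ⧸ G'' := QuotientAddGroup.mk (w 0 - g) with hq
        refine ⟨(e q).val, (e q).isLt, ?_⟩
        have hwi : w ((e q).val) = q.out := by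
          rw [hwdef]
          simp only [(e q).isLt, dif_pos]
          congr 1
          rw [Fin.eta, Equiv.symm_apply_apply]
        have hmkout : (QuotientAddGroup.mk q.out : G ⧸ G'') = q := QuotientAddGroup.out_eq' q
        rw [hq] at hmkout
        have hmem : -(q.out) + (w 0 - g) ∈ G'' := (QuotientAddGroup.eq).1 hmkout
        have hmem2 : -(-(q.out) + (w 0 - g)) ∈ G'' := neg_mem hmem
        have hmem3 : g + w ((e q).val) - w 0 ∈ G'' := by
          rw [hwi]
          convert hmem2 using 1
          abel
        have := (AddSubgroup.mem_addSubgroupOf).1 hmem3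
        simpa using this
      set y : ℕ → V (p ^ a) (p ^ b) := fun k =>
        if k % s1 = s1 - 1
        then ((w (k / s1 + 1) : V (p ^ a) (p ^ b)) - (w (k / s1) : V (p ^ a) (p ^ b)))
        else v (k % s1) with hydef
      have hymem : ∀ k, y k ∈ G := by
        intro k
        simp only [hydef]
        by_cases hc : k % s1 = s1 - 1
        · simp only [hc, if_pos]
          exact sub_mem (w _).2 (w _).2
        · rw [if_neg hc]
          exact hle (hvmem _)
      refine ⟨y, hymem, ?_⟩
      intro s₀ hs₀ r
      have hstate : ∀ k, rotState y r s₀ k ∈ G := by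
        intro k
        induction k with
        | zero => exact hs₀
        | succ k ih =>
            show (fun i2 => (rotState y r s₀ k + y k) (i2 + r k)) ∈ G
            exact hG _ (add_mem ih (hymem k)) (r k)
      have hres : ∀ k, rotState y r s₀ k
          - (s₀ + (w (k / s1) : V (p ^ a) (p ^ b)) - (w 0 : V (p ^ a) (p ^ b))) ∈ G' := by
        intro k
        induction k with
        | zero =>
            have h0 : rotState y r s₀ 0
                - (s₀ + (w (0 / s1) : V (p ^ a) (p ^ b)) - (w 0 : V (p ^ a) (p ^ b))) = 0 := by
              show s₀ - (s₀ + (w (0 / s1) : V (p ^ a) (p ^ b)) - (w 0 : V (p ^ a) (p ^ b))) = 0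
              rw [Nat.zero_div]
              abel
            rw [h0]
            exact zero_mem _
        | succ k ih =>
            set z := rotState y r s₀ k + y k with hz
            have hzmem : z ∈ G := add_mem (hstate k) (hymem k)
            have hrot : (fun i2 => z (i2 + r k)) - z ∈ G' := by
              rw [rot_eq_pow]
              exact sig_pow_sub_mem p hG _ hzmem
            have hdecomp : rotState y r s₀ (k + 1)
                - (s₀ + (w ((k+1) / s1) : V (p ^ a) (p ^ b)) - (w 0 : V (p ^ a) (p ^ b)))
                = ((fun i2 => z (i2 + r k)) - z)
                  + (z - (s₀ + (w ((k+1) / s1) : V (p ^ a) (p ^ b))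
                      - (w 0 : V (p ^ a) (p ^ b)))) := by
              show (fun i2 => z (i2 + r k))
                - (s₀ + (w ((k+1) / s1) : V (p ^ a) (p ^ b)) - (w 0 : V (p ^ a) (p ^ b))) = _
              abel
            rw [hdecomp]
            refine add_mem hrot ?_
            by_cases hc : k % s1 = s1 - 1
            · have hdiv : (k+1) / s1 = k / s1 + 1 := succ_div_of_mod s1 k hs1pos hc
              have hyk : y k = (w (k / s1 + 1) : V (p ^ a) (p ^ b))
                  - (w (k / s1) : V (p ^ a) (p ^ b)) := by simp only [hydef]; rw [if_pos hc]
              have heq : z - (s₀ + (w ((k+1) / s1) : V (p ^ a) (p ^ b))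
                    - (w 0 : V (p ^ a) (p ^ b)))
                  = rotState y r s₀ k
                    - (s₀ + (w (k / s1) : V (p ^ a) (p ^ b)) - (w 0 : V (p ^ a) (p ^ b))) := by
                rw [hz, hyk, hdiv]
                abel
              rw [heq]
              exact ih
            · have hdiv : (k+1) / s1 = k / s1 := succ_div_of_mod_ne s1 k hs1pos hc
              have hyk : y k = v (k % s1) := by simp only [hydef]; rw [if_neg hc]
              have heq : z - (s₀ + (w ((k+1) / s1) : V (p ^ a) (p ^ b))
                    - (w 0 : V (p ^ a) (p ^ b)))
                  = (rotState y r s₀ k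
                    - (s₀ + (w (k / s1) : V (p ^ a) (p ^ b)) - (w 0 : V (p ^ a) (p ^ b))))
                    + v (k % s1) := by
                rw [hz, hyk, hdiv]
                abel
              rw [heq]
              exact add_mem ih (hvmem _)
      obtain ⟨i, hi, hicov⟩ := hcov ⟨s₀, hs₀⟩
      have hSmem : rotState y r s₀ (i * s1) ∈ G' := by
        have h1 := hres (i * s1)
        have h2 : (i * s1) / s1 = i := Nat.mul_div_cancel i hs1pos
        rw [h2] at h1
        have h3 : rotState y r s₀ (i * s1)
            = (rotState y r s₀ (i * s1)
              - (s₀ + (w i : V (p ^ a) (p ^ b)) - (w 0 : V (p ^ a) (p ^ b))))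
              + ((s₀ + (w i : V (p ^ a) (p ^ b)) - (w 0 : V (p ^ a) (p ^ b)))) := by abel
        rw [h3]
        refine add_mem h1 ?_
        have : (s₀ + (w i : V (p ^ a) (p ^ b)) - (w 0 : V (p ^ a) (p ^ b)))
            = ((⟨s₀, hs₀⟩ : G) : V (p ^ a) (p ^ b)) + (w i : V (p ^ a) (p ^ b))
              - (w 0 : V (p ^ a) (p ^ b)) := rfl
        rw [this]
        exact hicov
      set r' : ℕ → Fin (p ^ a) := fun j => r (i * s1 + j) with hr'def
      have hsim : ∀ j, j ≤ s1 - 1 →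
          rotState y r s₀ (i * s1 + j) = rotState v r' (rotState y r s₀ (i * s1)) j := by
        intro j
        induction j with
        | zero => intro _; rfl
        | succ j ih =>
            intro hj
            have hj' : j ≤ s1 - 1 := by omega
            have hyk : y (i * s1 + j) = v j := by
              have hm : (i * s1 + j) % s1 = j := block_mod s1 i j hs1pos (by omega)
              simp only [hydef]
              rw [hm, if_neg (by omega)]
            show (fun i2 => (rotState y r s₀ (i * s1 + j) + y (i * s1 + j)) (i2 + r (i * s1 + j)))
              = (fun i2 => (rotState v r' (rotState y r s₀ (i * s1)) j + v j) (i2 + r' j))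
            rw [ih hj', hyk]
      obtain ⟨k', hk', hzero⟩ := hvwin (rotState y r s₀ (i * s1)) hSmem r'
      refine ⟨i * s1 + k', ?_, ?_⟩
      · have hk'2 : k' ≤ s1 - 1 := hk'
        have h1 : i * s1 ≤ (t1 - 1) * s1 := Nat.mul_le_mul_right s1 (by omega)
        have h2 : (t1 - 1) * s1 + s1 = t1 * s1 := by
          have : t1 - 1 + 1 = t1 := by omega
          calc (t1 - 1) * s1 + s1 = (t1 - 1 + 1) * s1 := by ring
          _ = t1 * s1 := by rw [this]
        omega
      · rw [hsim k' hk']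
        exact hzero

end Good

end RotAux


theorem rot_win_aux (p a b : ℕ) (hp : p.Prime) (ha : 0 < a) (hb : 0 < b) :
    (∃ y : ℕ → Fin (p ^ a) → ZMod (p ^ b),
      ∀ (s₀ : Fin (p ^ a) → ZMod (p ^ b)) (r : ℕ → Fin (p ^ a)),
        ∃ k ≤ p ^ (b * p ^ a) - 1, rotState y r s₀ k = 0) := by
  haveI : NeZero (p ^ a) := ⟨pow_ne_zero _ hp.ne_zero⟩
  haveI : NeZero (p ^ b) := ⟨pow_ne_zero _ hp.ne_zero⟩
  obtain ⟨y, hymem, hwin⟩ := RotAux.good p a b hp ha hb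
    (Nat.card (⊤ : AddSubgroup (RotAux.V (p ^ a) (p ^ b)))) ⊤ le_rfl
    (fun x _ r => AddSubgroup.mem_top _)
  have hcard : Nat.card (⊤ : AddSubgroup (RotAux.V (p ^ a) (p ^ b))) = p ^ (b * p ^ a) := by
    rw [Nat.card_congr AddSubgroup.topEquiv.toEquiv, Nat.card_eq_fintype_card,
      Fintype.card_fun, ZMod.card, Fintype.card_fin, pow_mul]
  refine ⟨y, fun s₀ r => ?_⟩
  obtain ⟨k, hk, h0⟩ := hwin s₀ (AddSubgroup.mem_top _) r
  exact ⟨k, by rw [← hcard]; exact hk, h0⟩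

end

theorem win_prime_power_with_length (p a b : ℕ) (hp : p.Prime) (ha : 0 < a) (hb : 0 < b) :
    (∃ y : ℕ → Fin (p ^ a) → ZMod (p ^ b),
      RotWinning (p ^ a) (p ^ b) (p ^ (b * p ^ a) - 1) y) ∧
    RotCanWin (p ^ a) (p ^ b) := by
  obtain ⟨y, hy⟩ := rot_win_aux p a b hp ha hb
  exact ⟨⟨y, hy⟩, ⟨_, y, hy⟩⟩
end

section
/- For all integers n ≥ 1 and m ≥ 1, every winning sequence of moves y_1, …, y_N for the (n, m) rotation game satisfies N ≥ m^n − 1. In other words, if the player can win, he cannot guarantee a win in fewer than m^n − 1 moves. -/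
theorem winning_sequence_length_lower_bound (n m : ℕ) (hn : 1 ≤ n) (hm : 1 ≤ m)
    (N : ℕ) (y : ℕ → Fin n → ZMod m) (hy : RotWinning n m N y) :
    m ^ n - 1 ≤ N := by
  haveI : NeZero m := ⟨by omega⟩
  haveI : NeZero n := ⟨by omega⟩
  have hstate : ∀ (s₀ : Fin n → ZMod m) (k : ℕ),
      rotState y (fun _ => 0) s₀ k = fun i => s₀ i + (∑ j ∈ Finset.range k, y j) i := by
    intro s₀ k
    induction k with
    | zero => funext i; simp [rotState]
    | succ k ih =>
      funext i
      simp [rotState, ih, Finset.sum_range_succ, add_assoc]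
  have key : Function.Surjective
      (fun k : Fin (N + 1) => fun i => - (∑ j ∈ Finset.range (k : ℕ), y j) i) := by
    intro s₀
    obtain ⟨k, hk, h0⟩ := hy s₀ (fun _ => 0)
    refine ⟨⟨k, by omega⟩, ?_⟩
    funext i
    have := congrFun (h0 ▸ (hstate s₀ k).symm) i
    simp only [Pi.zero_apply] at this
    simp only []
    linear_combination -this
  have hcard := Fintype.card_le_of_surjective _ key
  simp [Fintype.card_fun, ZMod.card] at hcard
  omega
end

section
/- Let p be a prime, a a natural number, n ≥ 1, and let G be a subgroup of the symmetric group on Fin n with |G| = p^a. Then the player can win the (G, p)-game, where the set of permutations available to the adversary is the underlying set of G (which contains the identity). -/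
/-- The state of the permutation game after `k` turns: `s₀` is the initial
configuration, `y k` is the move added on turn `k+1`, and `σ k` is the
permutation applied after that move (`(σ • x) i = x (σ⁻¹ i)`). -/
def permState {n m : ℕ} (y : ℕ → Fin n → ZMod m) (σ : ℕ → Equiv.Perm (Fin n))
    (s₀ : Fin n → ZMod m) : ℕ → Fin n → ZMod m
  | 0 => s₀
  | k + 1 => fun i => (permState y σ s₀ k + y k) ((σ k)⁻¹ i)

/-- The player can win the (S, m) permutation game: some finite sequence of
moves reaches the zero configuration against every initial configuration and
every sequence of permutations drawn from `S`. -/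
def PermCanWin {n : ℕ} (S : Set (Equiv.Perm (Fin n))) (m : ℕ) : Prop :=
  ∃ (N : ℕ) (y : ℕ → Fin n → ZMod m),
    ∀ (s₀ : Fin n → ZMod m) (σ : ℕ → Equiv.Perm (Fin n)),
      (∀ k, σ k ∈ S) → ∃ k ≤ N, permState y σ s₀ k = 0

namespace PGG

variable {n m : ℕ}

/-- The permutation action on configurations, as an additive hom. -/
def act (σ : Equiv.Perm (Fin n)) : (Fin n → ZMod m) →+ (Fin n → ZMod m) where
  toFun x := fun i => x (σ⁻¹ i)
  map_zero' := rfl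
  map_add' _ _ := rfl

lemma act_mul (σ τ : Equiv.Perm (Fin n)) (x : Fin n → ZMod m) :
    act (σ * τ) x = act σ (act τ x) := by
  funext i
  simp [act, mul_inv_rev, Equiv.Perm.mul_apply]

lemma act_one (x : Fin n → ZMod m) : act (1 : Equiv.Perm (Fin n)) x = x := by
  funext i; simp [act]

lemma permState_succ (y σ) (s₀ : Fin n → ZMod m) (k : ℕ) :
    permState y σ s₀ (k + 1) = act (σ k) (permState y σ s₀ k + y k) := rfl

variable (G : Subgroup (Equiv.Perm (Fin n)))

/-- The ascending chain of subgroups. -/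
def chain : ℕ → AddSubgroup (Fin n → ZMod m)
  | 0 => ⊥
  | i + 1 => ⨅ σ ∈ (G : Set (Equiv.Perm (Fin n))),
      (chain i).comap (act σ - AddMonoidHom.id _)

lemma mem_chain_succ {i : ℕ} {v : Fin n → ZMod m} :
    v ∈ chain G (i + 1) ↔ ∀ σ ∈ G, act σ v - v ∈ chain G i := by
  simp only [chain, AddSubgroup.mem_iInf, AddSubgroup.mem_comap, AddMonoidHom.sub_apply,
    AddMonoidHom.id_apply, SetLike.mem_coe]

lemma chain_mono_succ (i : ℕ) : chain G (m := m) i ≤ chain G (i + 1) := by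
  induction i with
  | zero => exact bot_le
  | succ i ih =>
    intro v hv
    rw [mem_chain_succ] at hv ⊢
    exact fun σ hσ => ih (hv σ hσ)

lemma chain_mono : Monotone (chain G (m := m)) :=
  monotone_nat_of_le_succ (chain_mono_succ G)

lemma act_mem_chain {i : ℕ} {σ : Equiv.Perm (Fin n)} (hσ : σ ∈ G)
    {v : Fin n → ZMod m} (hv : v ∈ chain G i) : act σ v ∈ chain G i := by
  induction i generalizing v with
  | zero =>
    simp only [chain, AddSubgroup.mem_bot] at hv ⊢
    simp [hv, map_zero]
  | succ i ih =>
    rw [mem_chain_succ] at hv ⊢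
    intro τ hτ
    have h1 : act (τ * σ) v - v ∈ chain G i := hv _ (G.mul_mem hτ hσ)
    have h2 : act σ v - v ∈ chain G i := hv σ hσ
    have : act τ (act σ v) - act σ v = (act (τ * σ) v - v) - (act σ v - v) := by
      rw [act_mul]; abel
    rw [this]
    exact sub_mem h1 h2

section Strict

variable {p : ℕ} [hp : Fact p.Prime]

lemma chain_strict {a : ℕ} (hG : Nat.card G = p ^ a)
    (i : ℕ) (h : chain G (m := p) i ≠ ⊤) :
    chain G (m := p) i < chain G (i + 1) := by
  set W := chain G (m := p) i with hW
  let Q := (Fin n → ZMod p) ⧸ W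
  have hmap : ∀ σ : Equiv.Perm (Fin n), σ ∈ G → W ≤ W.comap (act σ) := by
    intro σ hσ v hv
    exact act_mem_chain G hσ hv
  letI : MulAction ↥G Q :=
    { smul := fun σ q => QuotientAddGroup.map W W (act (σ : Equiv.Perm (Fin n)))
        (hmap _ σ.2) q
      one_smul := by
        intro q
        induction q using QuotientAddGroup.induction_on with
        | _ v => show QuotientAddGroup.map _ _ _ _ _ = _
                 rw [QuotientAddGroup.map_mk]
                 norm_num [act_one]
      mul_smul := by
        intro σ τ q
        induction q using QuotientAddGroup.induction_on with
        | _ v =>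
          show QuotientAddGroup.map _ _ _ _ _ =
            QuotientAddGroup.map _ _ _ _ (QuotientAddGroup.map _ _ _ _ _)
          rw [QuotientAddGroup.map_mk, QuotientAddGroup.map_mk, QuotientAddGroup.map_mk]
          norm_num [act_mul] }
  have hsmul_mk : ∀ (σ : ↥G) (v : Fin n → ZMod p),
      σ • (QuotientAddGroup.mk v : Q) = QuotientAddGroup.mk (act (σ : Equiv.Perm (Fin n)) v) := by
    intro σ v
    show QuotientAddGroup.map _ _ _ _ _ = _
    rw [QuotientAddGroup.map_mk]
  have hPG : IsPGroup p ↥G := IsPGroup.of_card hG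
  have hcardV : Nat.card (Fin n → ZMod p) = p ^ n := by
    simp [Nat.card_fun, Nat.card_eq_fintype_card, ZMod.card]
  have hdvdQ : Nat.card Q ∣ p ^ n := by
    rw [← hcardV, AddSubgroup.card_eq_card_quotient_mul_card_addSubgroup W]
    exact Dvd.intro _ rfl
  obtain ⟨e, he, hQcard⟩ := (Nat.dvd_prime_pow hp.out).mp hdvdQ
  -- Q is nontrivial
  obtain ⟨v₀, hv₀⟩ : ∃ v, v ∉ W := by
    by_contra hc
    push_neg at hc
    exact h (by ext v; simp [hc v])
  have hQnt : Nontrivial Q := by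
    refine ⟨QuotientAddGroup.mk v₀, 0, ?_⟩
    exact fun hc => hv₀ ((QuotientAddGroup.eq_zero_iff v₀).mp hc)
  have hppos : 0 < e := by
    rcases Nat.eq_zero_or_pos e with he0 | he0
    · exfalso
      rw [he0, pow_zero] at hQcard
      have := Nat.card_eq_one_iff_unique.mp hQcard
      exact not_subsingleton Q this.1
    · exact he0
  have hpQ : p ∣ Nat.card Q := hQcard ▸ dvd_pow_self p hppos.ne'
  have hmod := hPG.card_modEq_card_fixedPoints Q
  have hpF : p ∣ Nat.card (MulAction.fixedPoints ↥G Q) :=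
    Nat.modEq_zero_iff_dvd.mp (hmod.symm.trans (Nat.modEq_zero_iff_dvd.mpr hpQ))
  have h0F : (0 : Q) ∈ MulAction.fixedPoints ↥G Q := by
    intro σ
    show σ • (0 : Q) = 0
    have h00 : (0 : Q) = QuotientAddGroup.mk 0 := rfl
    rw [h00, hsmul_mk]
    simp
  have hFnt : Nontrivial (MulAction.fixedPoints ↥G Q) := by
    have h1 : 1 < Nat.card (MulAction.fixedPoints ↥G Q) := by
      have hpos : 0 < Nat.card (MulAction.fixedPoints ↥G Q) :=
        Nat.card_pos_iff.mpr ⟨⟨⟨0, h0F⟩⟩, inferInstance⟩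
      have h2 : 2 ≤ p := hp.out.two_le
      have h3 := Nat.le_of_dvd hpos hpF
      omega
    exact Finite.one_lt_card_iff_nontrivial.mp h1
  obtain ⟨q, hq⟩ := exists_ne (⟨(0 : Q), h0F⟩ : MulAction.fixedPoints ↥G Q)
  have hqne : (q : Q) ≠ 0 := fun hc => hq (Subtype.ext hc)
  obtain ⟨v, hv⟩ := QuotientAddGroup.mk_surjective (q : Q)
  have hvW : v ∉ W := by
    intro hc
    exact hqne (hv ▸ (QuotientAddGroup.eq_zero_iff v).mpr hc)
  have hvfix : v ∈ chain G (m := p) (i + 1) := by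
    rw [mem_chain_succ]
    intro σ hσ
    have := q.2 ⟨σ, hσ⟩
    rw [← hv, hsmul_mk] at this
    have := (QuotientAddGroup.eq).mp this
    -- -(act σ v) + v ∈ W
    have h2 : act σ v - v ∈ W := by
      have := neg_mem this
      simpa [neg_add_rev, sub_eq_add_neg, add_comm] using this
    exact h2
  exact lt_of_le_of_ne (chain_mono_succ G i) (fun hc => hvW (hc ▸ hvfix))



lemma chain_top {a : ℕ} (hG : Nat.card G = p ^ a) : ∃ t, chain G (m := p) t = ⊤ := by
  by_contra hc
  push_neg at hc
  have key : ∀ i, i < Nat.card (chain G (m := p) i) := by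
    intro i
    induction i with
    | zero => exact Nat.card_pos
    | succ i ih =>
      have hlt := chain_strict G hG i (hc i)
      have hss : (chain G (m := p) i : Set (Fin n → ZMod p)) ⊂
          (chain G (m := p) (i + 1) : Set (Fin n → ZMod p)) :=
        SetLike.coe_ssubset_coe.mpr hlt
      have hcard : Nat.card (chain G (m := p) i) < Nat.card (chain G (m := p) (i + 1)) := by
        rw [← SetLike.coe_sort_coe, ← SetLike.coe_sort_coe,
          Nat.card_coe_set_eq, Nat.card_coe_set_eq]
        exact Set.ncard_lt_ncard hss (Set.toFinite _)
      omega
  have h1 := key (Nat.card (Fin n → ZMod p))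
  have h2 : Nat.card (chain G (m := p) (Nat.card (Fin n → ZMod p))) ≤
      Nat.card (Fin n → ZMod p) :=
    Nat.card_le_card_of_injective _ Subtype.val_injective
  omega

end Strict

lemma permState_congr {y₁ y₂ : ℕ → Fin n → ZMod m} {σ : ℕ → Equiv.Perm (Fin n)}
    (s₀ : Fin n → ZMod m) (k : ℕ) (h : ∀ j < k, y₁ j = y₂ j) :
    permState y₁ σ s₀ k = permState y₂ σ s₀ k := by
  induction k with
  | zero => rfl
  | succ k ih =>
    have hk := ih (fun j hj => h j (Nat.lt_succ_of_lt hj))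
    show permState y₁ σ s₀ (k + 1) = permState y₂ σ s₀ (k + 1)
    rw [permState_succ, permState_succ, hk, h k (Nat.lt_succ_self k)]

lemma permState_shift (y : ℕ → Fin n → ZMod m) (σ : ℕ → Equiv.Perm (Fin n))
    (s₀ : Fin n → ZMod m) (t k : ℕ) :
    permState y σ s₀ (t + k) =
      permState (fun j => y (t + j)) (fun j => σ (t + j)) (permState y σ s₀ t) k := by
  induction k with
  | zero => rfl
  | succ k ih =>
    rw [← Nat.add_assoc, permState_succ, permState_succ, ih]

lemma permState_stay {i : ℕ} (w : ℕ → Fin n → ZMod m) (σ : ℕ → Equiv.Perm (Fin n))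
    (s : Fin n → ZMod m) (hs : s ∈ chain G (i + 1)) (hσ : ∀ k, σ k ∈ G) (k : ℕ)
    (hw : ∀ j < k, w j ∈ chain G i) :
    permState w σ s k ∈ chain G (i + 1) ∧ permState w σ s k - s ∈ chain G i := by
  induction k with
  | zero =>
    refine ⟨hs, ?_⟩
    rw [show permState w σ s 0 = s from rfl, sub_self]
    exact (chain G (m := m) i).zero_mem
  | succ k ih =>
    obtain ⟨h1, h2⟩ := ih (fun j hj => hw j (Nat.lt_succ_of_lt hj))
    have hwk : w k ∈ chain G (m := m) i := hw k (Nat.lt_succ_self k)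
    have hx : permState w σ s k + w k ∈ chain G (m := m) (i + 1) :=
      add_mem h1 (chain_mono_succ G i hwk)
    rw [permState_succ]
    constructor
    · exact act_mem_chain G (hσ k) hx
    · have hdiff : act (σ k) (permState w σ s k + w k) - (permState w σ s k + w k) ∈
          chain G (m := m) i := (mem_chain_succ G).mp hx (σ k) (hσ k)
      have heq : act (σ k) (permState w σ s k + w k) - s =
          (act (σ k) (permState w σ s k + w k) - (permState w σ s k + w k)) + w k +
            (permState w σ s k - s) := by abel
      rw [heq]
      exact add_mem (add_mem hdiff hwk) h2

lemma wins [NeZero m] (i : ℕ) :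
    ∃ N y, (∀ k, y k ∈ chain G (m := m) i) ∧
      ∀ s₀ ∈ chain G (m := m) i, ∀ σ : ℕ → Equiv.Perm (Fin n),
        (∀ k, σ k ∈ G) → ∃ k ≤ N, permState y σ s₀ k = 0 := by
  induction i with
  | zero =>
    refine ⟨0, fun _ => 0, fun k => (chain G (m := m) 0).zero_mem, ?_⟩
    intro s₀ hs₀ σ hσ
    have : s₀ = 0 := by
      have h := hs₀
      rw [show chain G (m := m) 0 = ⊥ from rfl, AddSubgroup.mem_bot] at h
      exact h
    exact ⟨0, le_refl 0, this⟩
  | succ i ih =>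
    obtain ⟨N, Y, hY, hwin⟩ := ih
    obtain ⟨M, ⟨e⟩⟩ := Finite.exists_equiv_fin ↥(chain G (m := m) (i + 1))
    set L := N + 1 with hL
    have hLpos : 0 < L := Nat.succ_pos N
    set F : ℕ → (Fin n → ZMod m) :=
      fun j => if h : j < M then ((e.symm ⟨j, h⟩ : ↥(chain G (m := m) (i + 1))) :
        Fin n → ZMod m) else 0 with hF
    have hFmem : ∀ j, F j ∈ chain G (m := m) (i + 1) := by
      intro j
      simp only [hF]
      split
      · exact (e.symm _).2
      · exact zero_mem _
    have hFsurj : ∀ v ∈ chain G (m := m) (i + 1), ∃ j < M, F j = v := by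
      intro v hv
      refine ⟨(e ⟨v, hv⟩ : Fin M), (e ⟨v, hv⟩).2, ?_⟩
      simp only [hF]
      rw [dif_pos (e ⟨v, hv⟩).2]
      simp
    set Fp : ℕ → (Fin n → ZMod m) := fun j => if j = 0 then 0 else F (j - 1) with hFp
    have hFpmem : ∀ j, Fp j ∈ chain G (m := m) (i + 1) := by
      intro j
      simp only [hFp]
      split
      · exact zero_mem _
      · exact hFmem _
    set y' : ℕ → (Fin n → ZMod m) := fun t =>
      if t % L = 0 then F (t / L) - Fp (t / L) else Y (t % L - 1) with hy'
    refine ⟨M * L, y', ?_, ?_⟩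
    · intro k
      simp only [hy']
      split
      · exact sub_mem (hFmem _) (hFpmem _)
      · exact chain_mono_succ G i (hY _)
    · intro s₀ hs₀ σ hσ
      -- the first-step-of-block helper
      have hblock : ∀ j, permState y' σ s₀ (j * L) ∈ chain G (m := m) (i + 1) →
          permState y' σ s₀ (j * L) - (s₀ + Fp j) ∈ chain G (m := m) i →
          permState y' σ s₀ (j * L + 1) ∈ chain G (m := m) (i + 1) ∧
          permState y' σ s₀ (j * L + 1) - (s₀ + F j) ∈ chain G (m := m) i := by
        intro j h1 h2
        have hmove : y' (j * L) = F j - Fp j := by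
          simp only [hy']
          rw [if_pos (Nat.mul_mod_left j L), Nat.mul_div_cancel j hLpos]
        have hx : permState y' σ s₀ (j * L) + y' (j * L) ∈ chain G (m := m) (i + 1) := by
          rw [hmove]
          exact add_mem h1 (sub_mem (hFmem j) (hFpmem j))
        rw [permState_succ]
        constructor
        · exact act_mem_chain G (hσ _) hx
        · have hdiff := (mem_chain_succ G).mp hx _ (hσ (j * L))
          have heq : act (σ (j * L)) (permState y' σ s₀ (j * L) + y' (j * L)) - (s₀ + F j) =
              (act (σ (j * L)) (permState y' σ s₀ (j * L) + y' (j * L)) -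
                (permState y' σ s₀ (j * L) + y' (j * L))) +
              (permState y' σ s₀ (j * L) - (s₀ + Fp j)) := by
            rw [hmove]; abel
          rw [heq]
          exact add_mem hdiff h2
      -- moves within a block agree with Y
      have hagree : ∀ j, ∀ j' < N, y' (j * L + 1 + j') = Y j' := by
        intro j j' hj'
        simp only [hy']
        have hmod : (j * L + 1 + j') % L = 1 + j' := by
          have h1 : j * L + 1 + j' = (1 + j') + j * L := by ring
          rw [h1, Nat.add_mul_mod_self_right, Nat.mod_eq_of_lt (by omega)]
        rw [hmod]
        rw [if_neg (show ¬(1 + j' = 0) by omega)]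
        rw [Nat.add_comm 1 j', Nat.add_sub_cancel]
      -- the invariant at block starts
      have hinv : ∀ j, permState y' σ s₀ (j * L) ∈ chain G (m := m) (i + 1) ∧
          permState y' σ s₀ (j * L) - (s₀ + Fp j) ∈ chain G (m := m) i := by
        intro j
        induction j with
        | zero =>
          rw [Nat.zero_mul]
          constructor
          · simpa [permState] using hs₀
          · have h0 : permState y' σ s₀ 0 - (s₀ + Fp 0) = 0 := by
              simp only [hFp]; simp [permState]
            rw [h0]; exact (chain G (m := m) i).zero_mem
        | succ j ihj =>
          obtain ⟨h1, h2⟩ := hblock j ihj.1 ihj.2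
          have hsplit : (j + 1) * L = (j * L + 1) + N := by rw [hL]; ring
          have hstay := permState_stay G (fun j' => y' (j * L + 1 + j'))
            (fun j' => σ (j * L + 1 + j')) _ h1 (fun k => hσ _) N
            (fun j' hj' => by
              show y' (j * L + 1 + j') ∈ chain G (m := m) i
              rw [hagree j j' hj']; exact hY j')
          rw [hsplit, permState_shift]
          constructor
          · exact hstay.1
          · have hFpj : Fp (j + 1) = F j := by simp only [hFp]; simp
            rw [hFpj]
            have heq2 : permState (fun j' => y' (j * L + 1 + j'))
                (fun j' => σ (j * L + 1 + j')) (permState y' σ s₀ (j * L + 1)) N - (s₀ + F j) =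
                (permState (fun j' => y' (j * L + 1 + j'))
                  (fun j' => σ (j * L + 1 + j')) (permState y' σ s₀ (j * L + 1)) N -
                  permState y' σ s₀ (j * L + 1)) +
                (permState y' σ s₀ (j * L + 1) - (s₀ + F j)) := by abel
            rw [heq2]
            exact add_mem hstay.2 h2
      -- choose the block whose shift cancels s₀
      obtain ⟨j, hjM, hFj⟩ := hFsurj (-s₀) (neg_mem hs₀)
      obtain ⟨h1, h2⟩ := hblock j (hinv j).1 (hinv j).2
      have hs1 : permState y' σ s₀ (j * L + 1) ∈ chain G (m := m) i := by
        have : s₀ + F j = 0 := by rw [hFj]; abel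
        rw [this, sub_zero] at h2
        exact h2
      obtain ⟨k, hkN, hk0⟩ := hwin _ hs1 (fun j' => σ (j * L + 1 + j')) (fun k => hσ _)
      refine ⟨j * L + 1 + k, ?_, ?_⟩
      · have : j + 1 ≤ M := hjM
        calc j * L + 1 + k ≤ j * L + 1 + N := by omega
          _ = (j + 1) * L := by rw [hL]; ring
          _ ≤ M * L := Nat.mul_le_mul_right L this
      · rw [permState_shift, permState_congr _ k (fun j' hj' => hagree j j' (by omega))]
        exact hk0

end PGG


theorem win_p_group_permutation_game (p : ℕ) (hp : p.Prime) (a n : ℕ) (hn : 1 ≤ n)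
    (G : Subgroup (Equiv.Perm (Fin n))) (hG : Nat.card G = p ^ a) :
    PermCanWin (G : Set (Equiv.Perm (Fin n))) p := by
  haveI : Fact p.Prime := ⟨hp⟩
  haveI : NeZero p := ⟨hp.ne_zero⟩
  obtain ⟨t, ht⟩ := PGG.chain_top G hG
  obtain ⟨N, y, -, hwin⟩ := PGG.wins G (m := p) t
  exact ⟨N, y, fun s₀ σ hσ => hwin s₀ (ht ▸ AddSubgroup.mem_top s₀) σ (fun k => hσ k)⟩
end

section
/- Let p be a prime, n ≥ 1, and let G be a subgroup of the symmetric group on Fin n whose cardinality is a power of p. Then there exists a basis x_0, x_1, …, x_{n−1} of the ZMod p-vector space (Fin n → ZMod p) such that for every j with 0 ≤ j ≤ n − 1 and every g ∈ G, the vector x_j − g • x_j lies in the linear span over ZMod p of x_0, x_1, …, x_{j−1}. -/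
open MulAction

/-- The linear action of a permutation on `Fin n → ZMod p`. -/
private def permL (p n : ℕ) (g : Equiv.Perm (Fin n)) :
    (Fin n → ZMod p) →ₗ[ZMod p] (Fin n → ZMod p) :=
  LinearMap.funLeft (ZMod p) (ZMod p) ⇑g⁻¹

private theorem exists_fixed_vector {p n : ℕ} (hp : p.Prime)
    (G : Subgroup (Equiv.Perm (Fin n))) (hG : ∃ a : ℕ, Nat.card G = p ^ a)
    (W : Submodule (ZMod p) (Fin n → ZMod p)) (hW : W ≠ ⊤)
    (hinv : ∀ g ∈ G, ∀ w ∈ W, (fun i => w (g⁻¹ i)) ∈ W) :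
    ∃ x : Fin n → ZMod p, x ∉ W ∧ ∀ g ∈ G, (fun i => x (g⁻¹ i)) - x ∈ W := by
  haveI : Fact p.Prime := ⟨hp⟩
  set V := Fin n → ZMod p
  set Q := V ⧸ W with hQ
  have hle : ∀ g : G, W ≤ W.comap (permL p n ↑g) := by
    intro g w hw
    exact hinv g g.2 w hw
  let σ : G → Q →ₗ[ZMod p] Q := fun g => Submodule.mapQ W W (permL p n ↑g) (hle g)
  letI : SMul G Q := ⟨fun g q => σ g q⟩
  have hsmul : ∀ (g : G) (x : V), g • (Submodule.Quotient.mk (p := W) x)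
      = Submodule.Quotient.mk (p := W) (permL p n ↑g x) := fun g x => by
    show σ g (Submodule.Quotient.mk (p := W) x) = _
    rfl
  letI : MulAction G Q :=
    { one_smul := by
        intro q
        obtain ⟨x, rfl⟩ := Submodule.Quotient.mk_surjective W q
        rw [hsmul]
        congr 1
      mul_smul := by
        intro g h q
        obtain ⟨x, rfl⟩ := Submodule.Quotient.mk_surjective W q
        rw [hsmul, hsmul, hsmul]
        congr 1 }
  haveI : Finite Q := Finite.of_surjective _ (Submodule.Quotient.mk_surjective W)
  obtain ⟨a, ha⟩ := hG
  have hpg : IsPGroup p G := IsPGroup.of_card ha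
  have hmod := hpg.card_modEq_card_fixedPoints Q
  haveI : Nontrivial Q := Submodule.Quotient.nontrivial_iff.mpr hW
  have hcard : Nat.card Q = p ^ (Module.finrank (ZMod p) Q) := by
    letI := Fintype.ofFinite Q
    rw [Nat.card_eq_fintype_card, Module.card_eq_pow_finrank (K := ZMod p) (V := Q), ZMod.card]
  have hfr : 0 < Module.finrank (ZMod p) Q := Module.finrank_pos
  have hdvdQ : p ∣ Nat.card Q := hcard ▸ dvd_pow_self p hfr.ne'
  have hdvdF : p ∣ Nat.card (fixedPoints G Q) :=
    Nat.modEq_zero_iff_dvd.mp ((hmod.symm.trans (Nat.modEq_zero_iff_dvd.mpr hdvdQ)))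
  have h0 : (0 : Q) ∈ fixedPoints G Q := by
    intro g
    show σ g 0 = 0
    simp
  haveI : Nonempty (fixedPoints G Q) := ⟨⟨0, h0⟩⟩
  have hpos : 0 < Nat.card (fixedPoints G Q) := Nat.card_pos
  have hlt : 1 < Nat.card (fixedPoints G Q) :=
    lt_of_lt_of_le hp.one_lt (Nat.le_of_dvd hpos hdvdF)
  letI := Fintype.ofFinite (fixedPoints G Q)
  rw [Nat.card_eq_fintype_card] at hlt
  obtain ⟨⟨q, hq⟩, hne⟩ := Fintype.exists_ne_of_one_lt_card hlt ⟨0, h0⟩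
  obtain ⟨x, rfl⟩ := Submodule.Quotient.mk_surjective W q
  refine ⟨x, ?_, ?_⟩
  · intro hxW
    exact hne (Subtype.ext ((Submodule.Quotient.mk_eq_zero W).mpr hxW))
  · intro g hg
    have := hq ⟨g, hg⟩
    rw [hsmul] at this
    exact (Submodule.Quotient.eq W).mp this

private theorem triangular_chain {p n : ℕ} (hp : p.Prime)
    (G : Subgroup (Equiv.Perm (Fin n))) (hG : ∃ a : ℕ, Nat.card G = p ^ a) :
    ∀ k, k ≤ n → ∃ x : Fin k → (Fin n → ZMod p), LinearIndependent (ZMod p) x ∧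
      ∀ j : Fin k, ∀ g ∈ G, (fun i => x j (g⁻¹ i)) - x j ∈
        Submodule.span (ZMod p) (x '' {j' : Fin k | j' < j}) := by
  haveI : Fact p.Prime := ⟨hp⟩
  intro k
  induction k with
  | zero =>
    intro _
    exact ⟨Fin.elim0, linearIndependent_empty_type, fun j => j.elim0⟩
  | succ k ih =>
    intro hk1
    obtain ⟨x, hx, hprop⟩ := ih (Nat.le_of_succ_le hk1)
    set W := Submodule.span (ZMod p) (Set.range x) with hWdef
    have hWne : W ≠ ⊤ := by
      intro htop
      have h1 : Module.finrank (ZMod p) W = k := by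
        rw [finrank_span_eq_card hx]
        simp
      have h2 : Module.finrank (ZMod p) W = n := by
        rw [htop, finrank_top, Module.finrank_fin_fun]
      omega
    have hWinv : ∀ g ∈ G, ∀ w ∈ W, (fun i => w (g⁻¹ i)) ∈ W := by
      intro g hg w hw
      have : permL p n g w ∈ Submodule.map (permL p n g) W :=
        Submodule.mem_map_of_mem hw
      rw [hWdef, Submodule.map_span] at this
      have hsub : Submodule.span (ZMod p) (permL p n g '' Set.range x) ≤ W := by
        rw [Submodule.span_le]
        rintro - ⟨-, ⟨j, rfl⟩, rfl⟩
        have hdiff := hprop j g hg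
        have hxj : x j ∈ W := Submodule.subset_span ⟨j, rfl⟩
        have hmem : (fun i => x j (g⁻¹ i)) - x j ∈ W :=
          Submodule.span_mono (Set.image_subset_range _ _) hdiff
        have : permL p n g (x j) = ((fun i => x j (g⁻¹ i)) - x j) + x j := by
          ext i; simp [permL]
        rw [this]
        exact Submodule.add_mem W hmem hxj
      exact hsub this
    obtain ⟨c, hcW, hcfix⟩ := exists_fixed_vector hp G hG W hWne hWinv
    refine ⟨Fin.snoc x c, linearIndependent_fin_snoc.mpr ⟨hx, hcW⟩, ?_⟩
    intro j g hg
    refine Fin.lastCases ?_ ?_ j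
    · rw [Fin.snoc_last]
      refine Submodule.span_mono ?_ (hcfix g hg)
      rintro - ⟨j', rfl⟩
      exact ⟨j'.castSucc, Fin.castSucc_lt_last j', by simp⟩
    · intro i
      rw [Fin.snoc_castSucc]
      refine Submodule.span_mono ?_ (hprop i g hg)
      rintro - ⟨i', hi', rfl⟩
      exact ⟨i'.castSucc, Fin.castSucc_lt_castSucc_iff.mpr hi', by simp⟩

theorem p_group_triangular_basis (p : ℕ) (hp : p.Prime) (n : ℕ) (hn : 1 ≤ n)
    (G : Subgroup (Equiv.Perm (Fin n))) (hG : ∃ a : ℕ, Nat.card G = p ^ a) :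
    ∃ b : Module.Basis (Fin n) (ZMod p) (Fin n → ZMod p),
      ∀ (j : Fin n), ∀ g ∈ G,
        (b j - fun i => b j (g⁻¹ i)) ∈
          Submodule.span (ZMod p) (⇑b '' {j' : Fin n | j' < j}) := by
  haveI : Fact p.Prime := ⟨hp⟩
  haveI : Nonempty (Fin n) := ⟨⟨0, hn⟩⟩
  obtain ⟨x, hx, hprop⟩ := triangular_chain hp G hG n le_rfl
  have hcard : Fintype.card (Fin n) = Module.finrank (ZMod p) (Fin n → ZMod p) := by
    simp [Module.finrank_fin_fun]
  refine ⟨basisOfLinearIndependentOfCardEqFinrank hx hcard, ?_⟩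
  intro j g hg
  rw [coe_basisOfLinearIndependentOfCardEqFinrank]
  have := hprop j g hg
  have hneg : x j - (fun i => x j (g⁻¹ i)) = -((fun i => x j (g⁻¹ i)) - x j) := by
    ring
  rw [hneg]
  exact Submodule.neg_mem _ this
end

section
/- Let p and q be distinct primes and let x, y : Fin p → ZMod q. If for every r : Fin p the function i ↦ x (i + r) + y i is constant, then x is constant. Consequently, from any configuration of the (p, q) rotation game that is not homogeneous, no single move can guarantee a homogeneous configuration after an arbitrary rotation of the table. -/
theorem no_move_homogenizes (p q : ℕ) (hp : p.Prime) (hq : q.Prime) (hpq : p ≠ q)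
    (x y : Fin p → ZMod q)
    (h : ∀ r : Fin p, ∃ c : ZMod q, ∀ i : Fin p, x (i + r) + y i = c) :
    ∃ c : ZMod q, ∀ i : Fin p, x i = c := by
  haveI : NeZero p := ⟨hp.ne_zero⟩
  haveI : Fact q.Prime := ⟨hq⟩
  obtain ⟨c0, h0⟩ := h 0
  refine ⟨x 0, fun r => ?_⟩
  obtain ⟨cr, hr⟩ := h r
  have key : ∀ i, x (i + r) = x i + (cr - c0) := by
    intro i
    have h1 := hr i
    have h2 := h0 i
    rw [add_zero] at h2
    linear_combination h1 - h2
  have sum_eq : ∑ i, x (i + r) = ∑ i, x i :=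
    Fintype.sum_equiv (Equiv.addRight r) _ _ (fun i => rfl)
  have hzero : (p : ZMod q) * (cr - c0) = 0 := by
    have h3 : ∑ i, x (i + r) = (∑ i, x i) + (p : ZMod q) * (cr - c0) := by
      simp [key, Finset.sum_add_distrib, Finset.card_univ, nsmul_eq_mul]
      ring
    rw [sum_eq] at h3
    linear_combination -h3
  have hp0 : (p : ZMod q) ≠ 0 := by
    rw [Ne, ZMod.natCast_eq_zero_iff]
    exact fun hd => hpq ((Nat.prime_dvd_prime_iff_eq hq hp).mp hd).symm
  have hd : cr - c0 = 0 := by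
    rcases mul_eq_zero.mp hzero with h' | h'
    · exact absurd h' hp0
    · exact h'
  have := key 0
  rw [zero_add, hd, add_zero] at this
  exact this
end
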